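/- Let E be a rearrangement-invariant quasi-Banach function space on (0,∞) with Boyd indices p_E, q_E, and let 0 < p_0 < p_E. Assume either q_E < p_1 < ∞ or p_1 = ∞. Then the continuous embeddings L_{p_0} ∩ L_{p_1} ⊂ E ⊂ L_{p_0} + L_{p_1} hold: there exist constants c, C > 0 with ‖f‖_{L_{p_0}+L_{p_1}} ≤ c ‖f‖_E for all f ∈ E and ‖f‖_E ≤ C max{‖f‖_{p_0}, ‖f‖_{p_1}} for all f ∈ L_{p_0} ∩ L_{p_1}. -/

import Mathlib

open MeasureTheory Set Filter
open scoped ENNReal NNReal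

noncomputable section

/-- The non-increasing rearrangement of a function on `(0, ∞)` (with Lebesgue measure):
`f^*(t) = inf {λ : |{s > 0 : |f(s)| > λ}| ≤ t}`. -/
def rearr (f : ℝ → ℝ) (t : ℝ) : ℝ≥0∞ :=
  sInf {lam : ℝ≥0∞ |
    volume {s : ℝ | 0 < s ∧ lam < ENNReal.ofReal |f s|} ≤ ENNReal.ofReal t}

/-- A rearrangement-invariant quasi-Banach function space on `(0,∞)`, given by the
functional `ρ` on (extended-)nonnegative measurable functions on `(0,∞)`. -/
structure RIQBFS where
  ρ : (ℝ → ℝ≥0∞) → ℝ≥0∞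
  C : ℝ
  one_le_C : 1 ≤ C
  eq_zero_iff : ∀ f : ℝ → ℝ≥0∞, ρ f = 0 ↔ f =ᵐ[volume.restrict (Set.Ioi (0 : ℝ))] 0
  smul_eq : ∀ (c : ℝ≥0) (f : ℝ → ℝ≥0∞), ρ (fun t => (c : ℝ≥0∞) * f t) = (c : ℝ≥0∞) * ρ f
  quasi_triangle : ∀ f g : ℝ → ℝ≥0∞, ρ (fun t => f t + g t) ≤ ENNReal.ofReal C * (ρ f + ρ g)
  mono : ∀ f g : ℝ → ℝ≥0∞,
    (∀ᵐ t ∂(volume.restrict (Set.Ioi (0 : ℝ))), g t ≤ f t) → ρ g ≤ ρ f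
  fatou : ∀ (fn : ℕ → ℝ → ℝ≥0∞) (f : ℝ → ℝ≥0∞),
    (∀ n, ∀ᵐ t ∂(volume.restrict (Set.Ioi (0 : ℝ))), fn n t ≤ fn (n + 1) t) →
    (∀ᵐ t ∂(volume.restrict (Set.Ioi (0 : ℝ))),
      Filter.Tendsto (fun n => fn n t) Filter.atTop (nhds (f t))) →
    Filter.Tendsto (fun n => ρ (fn n)) Filter.atTop (nhds (ρ f))
  indicator_finite : ∀ ω : Set ℝ, MeasurableSet ω → ω ⊆ Set.Ioi (0 : ℝ) → volume ω < ⊤ →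
    ρ (Set.indicator ω fun _ => 1) < ⊤

/-- The quasi-norm of the space `E`: `‖f‖_E = ρ_E (f^*)`. -/
def RIQBFS.normE (E : RIQBFS) (f : ℝ → ℝ) : ℝ≥0∞ := E.ρ (rearr f)

/-- The operator norm of the dilation operator `(D_a f)(t) = f (a t)` on `E`. -/
def dilNorm (E : RIQBFS) (a : ℝ) : ℝ≥0∞ :=
  ⨆ (f : ℝ → ℝ) (_ : Measurable f) (_ : E.normE f ≤ 1), E.normE fun t => f (a * t)

/-- The lower Boyd index
`p_E = sup {p > 0 : ∃ c > 0, ∀ 0 < a < 1, ‖D_a‖ ≤ c a^{-1/p}}` (an element of `(0, ∞]`). -/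
def lowerBoyd (E : RIQBFS) : ℝ≥0∞ :=
  sSup (ENNReal.ofReal ''
    {p : ℝ | 0 < p ∧ ∃ c : ℝ, 0 < c ∧ ∀ a : ℝ, 0 < a → a < 1 →
      dilNorm E a ≤ ENNReal.ofReal (c * a ^ (-(1 / p)))})

/-- The upper Boyd index
`q_E = inf {q > 0 : ∃ c > 0, ∀ a ≥ 1, ‖D_a‖ ≤ c a^{-1/q}}` (an element of `(0, ∞]`,
with `inf ∅ = ∞`). -/
def upperBoyd (E : RIQBFS) : ℝ≥0∞ :=
  sInf (ENNReal.ofReal ''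
    {q : ℝ | 0 < q ∧ ∃ c : ℝ, 0 < c ∧ ∀ a : ℝ, 1 ≤ a →
      dilNorm E a ≤ ENNReal.ofReal (c * a ^ (-(1 / q)))})


/-! ### Auxiliary lemmas -/

/-- distribution function -/
def dfn (f : ℝ → ℝ) (lam : ℝ≥0∞) : ℝ≥0∞ :=
  volume {s : ℝ | 0 < s ∧ lam < ENNReal.ofReal |f s|}

lemma dfn_antitone (f : ℝ → ℝ) {a b : ℝ≥0∞} (h : a ≤ b) : dfn f b ≤ dfn f a :=
  measure_mono (fun s hs => ⟨hs.1, lt_of_le_of_lt h hs.2⟩)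

lemma rearr_le_iff {f : ℝ → ℝ} {t : ℝ} {lam : ℝ≥0∞} :
    rearr f t ≤ lam ↔ dfn f lam ≤ ENNReal.ofReal t := by
  constructor
  · intro h
    rcases eq_or_ne lam ⊤ with rfl | hlam
    · have : {s : ℝ | 0 < s ∧ (⊤:ℝ≥0∞) < ENNReal.ofReal |f s|} = ∅ := by
        ext s; simp [not_top_lt]
      simp [dfn, this]
    · have hset : {s : ℝ | 0 < s ∧ lam < ENNReal.ofReal |f s|} =
          ⋃ n : ℕ, {s : ℝ | 0 < s ∧ lam + (n : ℝ≥0∞)⁻¹ < ENNReal.ofReal |f s|} := by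
        ext s
        simp only [mem_setOf_eq, mem_iUnion]
        constructor
        · rintro ⟨hs, hlt⟩
          rcases ENNReal.lt_iff_exists_add_pos_lt.1 hlt with ⟨r, hr0, hr⟩
          rcases ENNReal.exists_inv_nat_lt (by exact_mod_cast hr0.ne' : (r:ℝ≥0∞) ≠ 0)
            with ⟨n, hn⟩
          exact ⟨n, hs, lt_of_le_of_lt (add_le_add le_rfl hn.le) hr⟩
        · rintro ⟨n, hs, hlt⟩
          exact ⟨hs, lt_of_le_of_lt (le_add_right le_rfl) hlt⟩
      have hmono : Monotone (fun n : ℕ =>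
          {s : ℝ | 0 < s ∧ lam + (n : ℝ≥0∞)⁻¹ < ENNReal.ofReal |f s|}) := by
        intro n m hnm s hs
        refine ⟨hs.1, lt_of_le_of_lt (add_le_add le_rfl ?_) hs.2⟩
        exact ENNReal.inv_le_inv.2 (by exact_mod_cast hnm)
      rw [dfn, hset, hmono.measure_iUnion]
      refine iSup_le fun n => ?_
      have hlt : lam < lam + (n : ℝ≥0∞)⁻¹ :=
        ENNReal.lt_add_right hlam (by simp)
      have := lt_of_le_of_lt h hlt
      rcases sInf_lt_iff.1 this with ⟨b, hb, hblt⟩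
      have hsub : {s : ℝ | 0 < s ∧ lam + (n : ℝ≥0∞)⁻¹ < ENNReal.ofReal |f s|} ⊆
          {s : ℝ | 0 < s ∧ b < ENNReal.ofReal |f s|} :=
        fun s hs => ⟨hs.1, lt_of_le_of_lt hblt.le hs.2⟩
      exact le_trans (measure_mono hsub) hb
  · intro h
    exact sInf_le h

lemma dfn_rearr_le {f : ℝ → ℝ} {t : ℝ} :
    dfn f (rearr f t) ≤ ENNReal.ofReal t := rearr_le_iff.1 le_rfl

lemma rearr_le_of_dfn_le {f : ℝ → ℝ} {t : ℝ} {lam : ℝ≥0∞}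
    (h : dfn f lam ≤ ENNReal.ofReal t) : rearr f t ≤ lam := sInf_le h

lemma rearr_anti (f : ℝ → ℝ) : Antitone (rearr f) := by
  intro a b hab
  exact rearr_le_iff.2 (le_trans dfn_rearr_le (ENNReal.ofReal_le_ofReal hab))

lemma ennreal_eq_of_forall_le {x y : ℝ≥0∞} (h : ∀ lam, x ≤ lam ↔ y ≤ lam) : x = y :=
  le_antisymm ((h y).2 le_rfl) ((h x).1 le_rfl)

lemma dfn_smul {f : ℝ → ℝ} {c : ℝ} (hc : 0 < c) (lam : ℝ≥0∞) :
    dfn (fun s => c * f s) lam = dfn f (lam / ENNReal.ofReal c) := by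
  have hc0 : ENNReal.ofReal c ≠ 0 := by simp [hc]
  have hct : ENNReal.ofReal c ≠ ⊤ := ENNReal.ofReal_ne_top
  unfold dfn
  congr 1
  ext s
  simp only [mem_setOf_eq, and_congr_right_iff]
  intro _
  rw [abs_mul, abs_of_pos hc, ENNReal.ofReal_mul hc.le,
    ENNReal.div_lt_iff (Or.inl hc0) (Or.inl hct), mul_comm]

lemma rearr_smul {f : ℝ → ℝ} {c : ℝ} (hc : 0 < c) (t : ℝ) :
    rearr (fun s => c * f s) t = ENNReal.ofReal c * rearr f t := by
  have hc0 : ENNReal.ofReal c ≠ 0 := by simp [hc]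
  have hct : ENNReal.ofReal c ≠ ⊤ := ENNReal.ofReal_ne_top
  refine ennreal_eq_of_forall_le fun lam => ?_
  rw [rearr_le_iff, dfn_smul hc, ← rearr_le_iff, mul_comm,
    ← ENNReal.le_div_iff_mul_le (Or.inl hc0) (Or.inl hct)]

/-- the characteristic function of `(0,t)` as a real function -/
def chi (t : ℝ) : ℝ → ℝ := Set.indicator (Set.Ioo 0 t) (fun _ => 1)

lemma chi_dilate {t a : ℝ} (ha : 0 < a) :
    (fun s => chi t (a * s)) = chi (t / a) := by
  funext s
  unfold chi
  have hmem : a * s ∈ Set.Ioo 0 t ↔ s ∈ Set.Ioo 0 (t / a) := by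
    simp only [Set.mem_Ioo]
    constructor
    · rintro ⟨h1, h2⟩
      refine ⟨?_, ?_⟩
      · by_contra hs
        push_neg at hs
        nlinarith
      · rw [lt_div_iff₀ ha, mul_comm]; exact h2
    · rintro ⟨h1, h2⟩
      rw [lt_div_iff₀ ha] at h2
      exact ⟨by positivity, by rw [mul_comm]; exact h2⟩
  by_cases h : s ∈ Set.Ioo 0 (t / a)
  · rw [Set.indicator_of_mem (hmem.2 h), Set.indicator_of_mem h]
  · rw [Set.indicator_of_notMem (fun hm => h (hmem.1 hm)), Set.indicator_of_notMem h]

lemma dfn_chi {t : ℝ} (ht : 0 < t) (lam : ℝ≥0∞) :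
    dfn (chi t) lam = if lam < 1 then ENNReal.ofReal t else 0 := by
  unfold dfn chi
  by_cases h : lam < 1
  · rw [if_pos h]
    have : {s : ℝ | 0 < s ∧ lam < ENNReal.ofReal |Set.indicator (Set.Ioo 0 t) (fun _ => (1:ℝ)) s|}
        = Set.Ioo 0 t := by
      ext s
      simp only [mem_setOf_eq, Set.mem_Ioo]
      constructor
      · rintro ⟨hs, hlt⟩
        by_contra hcon
        have : s ∉ Set.Ioo 0 t := fun hm => hcon (Set.mem_Ioo.1 hm)
        rw [Set.indicator_of_notMem this] at hlt
        simp at hlt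
      · rintro ⟨h1, h2⟩
        refine ⟨h1, ?_⟩
        rw [Set.indicator_of_mem (Set.mem_Ioo.2 ⟨h1, h2⟩)]
        simpa using h
    rw [this, Real.volume_Ioo]
    simp
  · rw [if_neg h]
    push_neg at h
    have : {s : ℝ | 0 < s ∧ lam < ENNReal.ofReal |Set.indicator (Set.Ioo 0 t) (fun _ => (1:ℝ)) s|}
        = ∅ := by
      ext s
      simp only [mem_setOf_eq, Set.mem_empty_iff_false, iff_false, not_and]
      intro _
      intro hlt
      have h1 : ENNReal.ofReal |Set.indicator (Set.Ioo 0 t) (fun _ => (1:ℝ)) s| ≤ 1 := by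
        by_cases hs : s ∈ Set.Ioo 0 t
        · rw [Set.indicator_of_mem hs]; simp
        · rw [Set.indicator_of_notMem hs]; simp
      exact absurd (lt_of_le_of_lt h (lt_of_lt_of_le hlt h1)) (lt_irrefl _)
    rw [this]
    simp

lemma rearr_chi {t : ℝ} (ht : 0 < t) (u : ℝ) :
    rearr (chi t) u = if ENNReal.ofReal u < ENNReal.ofReal t then 1 else 0 := by
  by_cases h : ENNReal.ofReal u < ENNReal.ofReal t
  · rw [if_pos h]
    refine le_antisymm ?_ ?_
    · refine rearr_le_iff.2 ?_
      rw [dfn_chi ht]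
      simp
    · by_contra hcon
      push_neg at hcon
      have h2 := dfn_rearr_le (f := chi t) (t := u)
      rw [dfn_chi ht, if_pos hcon] at h2
      exact absurd (lt_of_le_of_lt h2 h) (lt_irrefl _)
  · rw [if_neg h]
    push_neg at h
    refine le_antisymm ?_ (zero_le')
    refine rearr_le_iff.2 ?_
    rw [dfn_chi ht]
    split_ifs with h'
    · exact h
    · exact zero_le'


lemma rho_congr (E : RIQBFS) {f g : ℝ → ℝ≥0∞}
    (h : ∀ᵐ t ∂(volume.restrict (Set.Ioi (0:ℝ))), f t = g t) : E.ρ f = E.ρ g :=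
  le_antisymm (E.mono g f (h.mono fun _ ht => ht.le))
    (E.mono f g (h.mono fun _ ht => ht.ge))

lemma rho_smul (E : RIQBFS) {x : ℝ≥0∞} (hx : x ≠ ⊤) (f : ℝ → ℝ≥0∞) :
    E.ρ (fun t => x * f t) = x * E.ρ f := by
  lift x to ℝ≥0 using hx
  exact E.smul_eq x f

def Phi (E : RIQBFS) (t : ℝ) : ℝ≥0∞ := E.ρ (Set.indicator (Set.Ioo 0 t) fun _ => 1)

lemma ae_Ioi {P : ℝ → Prop} (h : ∀ t, 0 < t → P t) :
    ∀ᵐ t ∂(volume.restrict (Set.Ioi (0:ℝ))), P t := by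
  filter_upwards [self_mem_ae_restrict measurableSet_Ioi] with t ht
  exact h t ht

lemma normE_chi (E : RIQBFS) {t : ℝ} (ht : 0 < t) : E.normE (chi t) = Phi E t := by
  refine rho_congr E (ae_Ioi fun u hu => ?_)
  rw [rearr_chi ht]
  by_cases h : u < t
  · rw [if_pos ((ENNReal.ofReal_lt_ofReal_iff ht).2 h),
      Set.indicator_of_mem (Set.mem_Ioo.2 ⟨hu, h⟩)]
  · rw [if_neg (fun hc => h ((ENNReal.ofReal_lt_ofReal_iff ht).1 hc)),
      Set.indicator_of_notMem (fun hm => h (Set.mem_Ioo.1 hm).2)]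

lemma Phi_pos (E : RIQBFS) {t : ℝ} (ht : 0 < t) : 0 < Phi E t := by
  rw [pos_iff_ne_zero]
  intro h0
  have h : ∀ᵐ x ∂(volume.restrict (Set.Ioi (0:ℝ))),
      (Set.indicator (Set.Ioo 0 t) (fun _ => (1:ℝ≥0∞))) x = 0 := (E.eq_zero_iff _).1 h0
  have hnull := ae_iff.1 h
  have hsub : Set.Ioo (0:ℝ) t ⊆
      {x | ¬ (Set.indicator (Set.Ioo 0 t) (fun _ => (1:ℝ≥0∞))) x = 0} := by
    intro x hx
    rw [Set.mem_setOf_eq, Set.indicator_of_mem hx]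
    simp
  have : (volume.restrict (Set.Ioi (0:ℝ))) (Set.Ioo 0 t) = 0 :=
    measure_mono_null hsub hnull
  rw [Measure.restrict_apply measurableSet_Ioo,
    Set.inter_eq_left.2 (fun x hx => hx.1), Real.volume_Ioo] at this
  simp only [sub_zero] at this
  exact absurd this (by simp [ht])

lemma Phi_lt_top (E : RIQBFS) (t : ℝ) : Phi E t < ⊤ :=
  E.indicator_finite _ measurableSet_Ioo (fun _ hx => hx.1)
    (by rw [Real.volume_Ioo]; exact ENNReal.ofReal_lt_top)

lemma chi_measurable (t : ℝ) : Measurable (chi t) :=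
  Measurable.indicator measurable_const measurableSet_Ioo

lemma normE_smul (E : RIQBFS) {c : ℝ} (hc : 0 < c) (f : ℝ → ℝ) :
    E.normE (fun s => c * f s) = ENNReal.ofReal c * E.normE f := by
  unfold RIQBFS.normE
  have h : rearr (fun s => c * f s) = fun t => ENNReal.ofReal c * rearr f t :=
    funext (rearr_smul hc)
  rw [h, rho_smul E ENNReal.ofReal_ne_top]

lemma normE_dilate (E : RIQBFS) {g : ℝ → ℝ} (hg : Measurable g) (a : ℝ)
    (h0 : E.normE g ≠ 0) (htop : E.normE g ≠ ⊤) :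
    E.normE (fun s => g (a * s)) ≤ dilNorm E a * E.normE g := by
  set r := (E.normE g).toReal with hr
  have hrpos : 0 < r := ENNReal.toReal_pos h0 htop
  have hofr : ENNReal.ofReal r = E.normE g := ENNReal.ofReal_toReal htop
  have hne0 : ENNReal.ofReal r ≠ 0 := by rw [hofr]; exact h0
  have hcancel : ENNReal.ofReal r * ENNReal.ofReal r⁻¹ = 1 := by
    rw [ENNReal.ofReal_inv_of_pos hrpos]
    exact ENNReal.mul_inv_cancel hne0 ENNReal.ofReal_ne_top
  have hnorm : E.normE (fun s => r⁻¹ * g s) = 1 := by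
    rw [normE_smul E (inv_pos.2 hrpos), ← hofr, ENNReal.ofReal_inv_of_pos hrpos,
      ENNReal.inv_mul_cancel hne0 ENNReal.ofReal_ne_top]
  have hle : E.normE (fun s => r⁻¹ * g (a * s)) ≤ dilNorm E a := by
    have h2 : E.normE (fun s => (fun u => r⁻¹ * g u) (a * s)) ≤ dilNorm E a :=
      le_iSup_of_le (fun u => r⁻¹ * g u)
        (le_iSup_of_le (measurable_const.mul hg)
          (le_iSup_of_le hnorm.le le_rfl))
    exact h2
  have hkey : E.normE (fun s => r⁻¹ * g (a * s)) =
      ENNReal.ofReal r⁻¹ * E.normE (fun s => g (a * s)) :=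
    normE_smul E (inv_pos.2 hrpos) (fun s => g (a * s))
  calc E.normE (fun s => g (a * s))
      = (ENNReal.ofReal r * ENNReal.ofReal r⁻¹) * E.normE (fun s => g (a * s)) := by
        rw [hcancel, one_mul]
    _ = ENNReal.ofReal r * E.normE (fun s => r⁻¹ * g (a * s)) := by
        rw [hkey, mul_assoc]
    _ ≤ ENNReal.ofReal r * dilNorm E a := mul_le_mul_right hle _
    _ = dilNorm E a * E.normE g := by rw [hofr, mul_comm]

lemma normE_chi_ne_zero (E : RIQBFS) {t : ℝ} (ht : 0 < t) : E.normE (chi t) ≠ 0 := by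
  rw [normE_chi E ht]; exact (Phi_pos E ht).ne'

lemma normE_chi_ne_top (E : RIQBFS) {t : ℝ} (ht : 0 < t) : E.normE (chi t) ≠ ⊤ := by
  rw [normE_chi E ht]; exact (Phi_lt_top E t).ne

lemma Phi_dilate (E : RIQBFS) {a t : ℝ} (ha : 0 < a) (ht : 0 < t) :
    Phi E (t / a) ≤ dilNorm E a * Phi E t := by
  have h1 : E.normE (fun s => chi t (a * s)) ≤ dilNorm E a * E.normE (chi t) :=
    normE_dilate E (chi_measurable t) a (normE_chi_ne_zero E ht) (normE_chi_ne_top E ht)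
  rw [chi_dilate ha, normE_chi E (div_pos ht ha), normE_chi E ht] at h1
  exact h1

lemma lowerBoyd_extract (E : RIQBFS) {p0 : ℝ} (hp0 : 0 < p0)
    (h : ENNReal.ofReal p0 < lowerBoyd E) :
    ∃ p c : ℝ, p0 < p ∧ 0 < c ∧ ∀ a : ℝ, 0 < a → a < 1 →
      dilNorm E a ≤ ENNReal.ofReal (c * a ^ (-(1 / p))) := by
  rcases lt_sSup_iff.1 h with ⟨x, hx, hlt⟩
  rcases hx with ⟨p, ⟨_, c, hc, hball⟩, rfl⟩
  exact ⟨p, c, (ENNReal.ofReal_lt_ofReal_iff_of_nonneg hp0.le).1 hlt, hc, hball⟩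

lemma upperBoyd_extract (E : RIQBFS) {p1 : ℝ≥0∞} (h : upperBoyd E < p1) :
    ∃ q c : ℝ, 0 < q ∧ ENNReal.ofReal q < p1 ∧ 0 < c ∧ ∀ a : ℝ, 1 ≤ a →
      dilNorm E a ≤ ENNReal.ofReal (c * a ^ (-(1 / q))) := by
  rcases sInf_lt_iff.1 h with ⟨x, hx, hlt⟩
  rcases hx with ⟨q, ⟨hq, c, hc, hball⟩, rfl⟩
  exact ⟨q, c, hq, hlt, hc, hball⟩

lemma rho_sum_le (E : RIQBFS) :
    ∀ (n : ℕ) (w : ℕ → ℝ → ℝ≥0∞), E.ρ (fun t => ∑ k ∈ Finset.range (n+1), w k t) ≤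
      ∑ k ∈ Finset.range (n+1), (ENNReal.ofReal E.C) ^ (k+1) * E.ρ (w k) := by
  have hC1 : (1:ℝ≥0∞) ≤ ENNReal.ofReal E.C := ENNReal.one_le_ofReal.2 E.one_le_C
  intro n
  induction n with
  | zero =>
    intro w
    simp only [zero_add, Finset.range_one, Finset.sum_singleton, pow_one]
    exact le_mul_of_one_le_left (zero_le') hC1
  | succ n ih =>
    intro w
    have hsplit : (fun t => ∑ k ∈ Finset.range (n+2), w k t) =
        (fun t => (∑ k ∈ Finset.range (n+1), w (k+1) t) + w 0 t) := by
      funext t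
      rw [Finset.sum_range_succ']
    rw [hsplit]
    refine le_trans (E.quasi_triangle _ _) ?_
    have h1 : E.ρ (fun t => ∑ k ∈ Finset.range (n+1), w (k+1) t) ≤
        ∑ k ∈ Finset.range (n+1), (ENNReal.ofReal E.C) ^ (k+1) * E.ρ (w (k+1)) :=
      ih (fun k => w (k+1))
    calc ENNReal.ofReal E.C * (E.ρ (fun t => ∑ k ∈ Finset.range (n+1), w (k+1) t) + E.ρ (w 0))
        ≤ ENNReal.ofReal E.C *
          ((∑ k ∈ Finset.range (n+1), (ENNReal.ofReal E.C) ^ (k+1) * E.ρ (w (k+1))) + E.ρ (w 0)) :=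
          mul_le_mul_right (add_le_add_left h1 _) _
      _ = (∑ k ∈ Finset.range (n+1), (ENNReal.ofReal E.C) ^ (k+2) * E.ρ (w (k+1))) +
          ENNReal.ofReal E.C * E.ρ (w 0) := by
          rw [mul_add, Finset.mul_sum]
          congr 1
          refine Finset.sum_congr rfl fun k _ => ?_
          rw [← mul_assoc, ← pow_succ']
      _ = ∑ k ∈ Finset.range (n+2), (ENNReal.ofReal E.C) ^ (k+1) * E.ρ (w k) := by
          rw [Finset.sum_range_succ' (fun k => (ENNReal.ofReal E.C) ^ (k+1) * E.ρ (w k)) (n+1)]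
          simp [pow_succ]


lemma mul_Phi_le_rho (E : RIQBFS) (f : ℝ → ℝ) {t : ℝ} (ht : 0 < t) {x : ℝ≥0∞}
    (hx : x ≠ ⊤) (hle : x ≤ rearr f t) : x * Phi E t ≤ E.ρ (rearr f) := by
  have hmono : ∀ᵐ u ∂(volume.restrict (Set.Ioi (0:ℝ))),
      x * (Set.indicator (Set.Ioo 0 t) (fun _ => (1:ℝ≥0∞))) u ≤ rearr f u := by
    refine ae_Ioi fun u hu => ?_
    by_cases h : u < t
    · rw [Set.indicator_of_mem (Set.mem_Ioo.2 ⟨hu, h⟩), mul_one]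
      exact hle.trans (rearr_anti f h.le)
    · rw [Set.indicator_of_notMem (fun hm => h (Set.mem_Ioo.1 hm).2), mul_zero]
      exact zero_le'
  have h2 := E.mono (rearr f) _ hmono
  rwa [rho_smul E hx] at h2

lemma rearr_mul_Phi_le (E : RIQBFS) (f : ℝ → ℝ) {t : ℝ} (ht : 0 < t) :
    rearr f t * Phi E t ≤ E.ρ (rearr f) := by
  rcases eq_or_ne (rearr f t) ⊤ with htop | hne
  · have hall : ∀ n : ℕ, (n : ℝ≥0∞) * Phi E t ≤ E.ρ (rearr f) := fun n =>
      mul_Phi_le_rho E f ht (by simp) (by rw [htop]; exact le_top)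
    have hsup := iSup_le hall
    rw [← ENNReal.iSup_mul, ENNReal.iSup_natCast,
      ENNReal.top_mul (Phi_pos E ht).ne'] at hsup
    rw [top_le_iff.1 hsup]
    exact le_top
  · exact mul_Phi_le_rho E f ht hne le_rfl

lemma rearr_pointwise_lower (E : RIQBFS) {f : ℝ → ℝ} {p c : ℝ} (hc : 0 < c)
    (hdil : ∀ a : ℝ, 0 < a → a < 1 → dilNorm E a ≤ ENNReal.ofReal (c * a ^ (-(1 / p))))
    (hN : E.ρ (rearr f) ≠ ⊤) {t : ℝ} (ht : 0 < t) (ht1 : t ≤ 1) :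
    rearr f t ≤ ENNReal.ofReal
      (max c 1 * (E.ρ (rearr f)).toReal / (Phi E 1).toReal * t ^ (-(1/p))) := by
  have φpos := Phi_pos E one_pos
  have φfin := Phi_lt_top E 1
  have hA : (0:ℝ) ≤ max c 1 * t ^ (-(1/p)) :=
    mul_nonneg (le_max_of_le_right zero_le_one) (Real.rpow_nonneg ht.le _)
  have step1 : Phi E 1 ≤ ENNReal.ofReal (max c 1 * t ^ (-(1/p))) * Phi E t := by
    rcases lt_or_eq_of_le ht1 with hlt | heq
    · have h1 := Phi_dilate E ht ht
      rw [div_self ht.ne'] at h1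
      refine h1.trans (mul_le_mul_left ((hdil t ht hlt).trans ?_) _)
      exact ENNReal.ofReal_le_ofReal
        (mul_le_mul_of_nonneg_right (le_max_left _ _) (Real.rpow_nonneg ht.le _))
    · subst heq
      rw [Real.one_rpow, mul_one]
      exact le_mul_of_one_le_left (zero_le')
        (ENNReal.one_le_ofReal.2 (le_max_right _ _))
  have step2 : rearr f t * Phi E 1 ≤
      ENNReal.ofReal (max c 1 * t ^ (-(1/p))) * E.ρ (rearr f) :=
    calc rearr f t * Phi E 1
        ≤ rearr f t * (ENNReal.ofReal (max c 1 * t ^ (-(1/p))) * Phi E t) :=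
          mul_le_mul_right step1 _
      _ = ENNReal.ofReal (max c 1 * t ^ (-(1/p))) * (rearr f t * Phi E t) := by ring
      _ ≤ ENNReal.ofReal (max c 1 * t ^ (-(1/p))) * E.ρ (rearr f) :=
          mul_le_mul_right (rearr_mul_Phi_le E f ht) _
  have step3 : rearr f t ≤
      ENNReal.ofReal (max c 1 * t ^ (-(1/p))) * E.ρ (rearr f) / Phi E 1 :=
    (ENNReal.le_div_iff_mul_le (Or.inl φpos.ne') (Or.inl φfin.ne)).2 step2
  refine step3.trans (le_of_eq ?_)
  rw [← ENNReal.ofReal_toReal hN, ← ENNReal.ofReal_toReal φfin.ne,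
    ← ENNReal.ofReal_mul hA, ← ENNReal.ofReal_div_of_pos (ENNReal.toReal_pos φpos.ne' φfin.ne)]
  congr 1
  simp only [ENNReal.toReal_ofReal ENNReal.toReal_nonneg]
  ring

lemma rearr_pointwise_upper (E : RIQBFS) {f : ℝ → ℝ} {q c : ℝ} (hc : 0 < c)
    (hdil : ∀ a : ℝ, 1 ≤ a → dilNorm E a ≤ ENNReal.ofReal (c * a ^ (-(1 / q))))
    (hN : E.ρ (rearr f) ≠ ⊤) {t : ℝ} (ht1 : 1 ≤ t) :
    rearr f t ≤ ENNReal.ofReal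
      (max c 1 * (E.ρ (rearr f)).toReal / (Phi E 1).toReal * t ^ (-(1/q))) := by
  have ht : (0:ℝ) < t := lt_of_lt_of_le one_pos ht1
  have φpos := Phi_pos E one_pos
  have φfin := Phi_lt_top E 1
  have hA : (0:ℝ) ≤ max c 1 * t ^ (-(1/q)) :=
    mul_nonneg (le_max_of_le_right zero_le_one) (Real.rpow_nonneg ht.le _)
  have step1 : Phi E 1 ≤ ENNReal.ofReal (max c 1 * t ^ (-(1/q))) * Phi E t := by
    have h1 := Phi_dilate E ht ht
    rw [div_self ht.ne'] at h1
    refine h1.trans (mul_le_mul_left ((hdil t ht1).trans ?_) _)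
    exact ENNReal.ofReal_le_ofReal
      (mul_le_mul_of_nonneg_right (le_max_left _ _) (Real.rpow_nonneg ht.le _))
  have step2 : rearr f t * Phi E 1 ≤
      ENNReal.ofReal (max c 1 * t ^ (-(1/q))) * E.ρ (rearr f) :=
    calc rearr f t * Phi E 1
        ≤ rearr f t * (ENNReal.ofReal (max c 1 * t ^ (-(1/q))) * Phi E t) :=
          mul_le_mul_right step1 _
      _ = ENNReal.ofReal (max c 1 * t ^ (-(1/q))) * (rearr f t * Phi E t) := by ring
      _ ≤ ENNReal.ofReal (max c 1 * t ^ (-(1/q))) * E.ρ (rearr f) :=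
          mul_le_mul_right (rearr_mul_Phi_le E f ht) _
  have step3 : rearr f t ≤
      ENNReal.ofReal (max c 1 * t ^ (-(1/q))) * E.ρ (rearr f) / Phi E 1 :=
    (ENNReal.le_div_iff_mul_le (Or.inl φpos.ne') (Or.inl φfin.ne)).2 step2
  refine step3.trans (le_of_eq ?_)
  rw [← ENNReal.ofReal_toReal hN, ← ENNReal.ofReal_toReal φfin.ne,
    ← ENNReal.ofReal_mul hA, ← ENNReal.ofReal_div_of_pos (ENNReal.toReal_pos φpos.ne' φfin.ne)]
  congr 1
  simp only [ENNReal.toReal_ofReal ENNReal.toReal_nonneg]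
  ring


lemma Phi_le_of_lower (E : RIQBFS) {p c : ℝ} (hc : 0 < c)
    (hdil : ∀ a : ℝ, 0 < a → a < 1 → dilNorm E a ≤ ENNReal.ofReal (c * a ^ (-(1 / p))))
    {t : ℝ} (ht1 : 1 ≤ t) :
    Phi E t ≤ ENNReal.ofReal (max c 1 * t ^ (1/p)) * Phi E 1 := by
  have ht0 : (0:ℝ) < t := lt_of_lt_of_le one_pos ht1
  rcases lt_or_eq_of_le ht1 with hlt | heq
  · have ha0 : (0:ℝ) < 1/t := by positivity
    have ha1 : 1/t < 1 := by rw [div_lt_one ht0]; exact hlt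
    have h1 := Phi_dilate E ha0 one_pos
    rw [one_div_one_div] at h1
    refine h1.trans ?_
    refine mul_le_mul_left ((hdil _ ha0 ha1).trans (ENNReal.ofReal_le_ofReal ?_)) _
    have hpow : (1/t) ^ (-(1/p)) = t ^ (1/p) := by
      rw [one_div t, ← Real.rpow_neg_one t, ← Real.rpow_mul ht0.le]
      congr 1
      ring
    rw [hpow]
    exact mul_le_mul_of_nonneg_right (le_max_left _ _) (Real.rpow_nonneg ht0.le _)
  · rw [← heq, Real.one_rpow, mul_one]
    exact le_mul_of_one_le_left (zero_le') (ENNReal.one_le_ofReal.2 (le_max_right _ _))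

lemma Phi_le_of_upper (E : RIQBFS) {q c : ℝ} (hc : 0 < c)
    (hdil : ∀ a : ℝ, 1 ≤ a → dilNorm E a ≤ ENNReal.ofReal (c * a ^ (-(1 / q))))
    {t : ℝ} (ht0 : 0 < t) (ht1 : t ≤ 1) :
    Phi E t ≤ ENNReal.ofReal (c * t ^ (1/q)) * Phi E 1 := by
  have ha1 : 1 ≤ 1/t := by rw [le_div_iff₀ ht0]; linarith
  have h1 := Phi_dilate E (by positivity : (0:ℝ) < 1/t) one_pos
  rw [one_div_one_div] at h1
  refine h1.trans ?_
  refine mul_le_mul_left ((hdil _ ha1).trans (ENNReal.ofReal_le_ofReal (le_of_eq ?_))) _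
  congr 1
  rw [one_div t, ← Real.rpow_neg_one t, ← Real.rpow_mul ht0.le]
  congr 1
  ring

lemma rho_zero (E : RIQBFS) : E.ρ (fun _ => 0) = 0 :=
  (E.eq_zero_iff _).2 (Filter.Eventually.of_forall fun _ => rfl)

lemma rho_tsum_le (E : RIQBFS) (w : ℕ → ℝ → ℝ≥0∞) (S : ℝ≥0∞)
    (hS : ∀ n, ∑ k ∈ Finset.range (n+1), (ENNReal.ofReal E.C)^(k+1) * E.ρ (w k) ≤ S) :
    E.ρ (fun t => ∑' k, w k t) ≤ S := by
  have hmono : ∀ n, ∀ᵐ t ∂(volume.restrict (Set.Ioi (0:ℝ))),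
      (fun n t => ∑ k ∈ Finset.range (n+1), w k t) n t ≤
      (fun n t => ∑ k ∈ Finset.range (n+1), w k t) (n+1) t :=
    fun n => Filter.Eventually.of_forall fun t =>
      Finset.sum_le_sum_of_subset (Finset.range_subset_range.2 (by omega))
  have htend : ∀ᵐ t ∂(volume.restrict (Set.Ioi (0:ℝ))),
      Filter.Tendsto (fun n => ∑ k ∈ Finset.range (n+1), w k t) Filter.atTop
        (nhds (∑' k, w k t)) :=
    Filter.Eventually.of_forall fun t =>
      (ENNReal.tendsto_nat_tsum (fun k => w k t)).comp (Filter.tendsto_add_atTop_nat 1)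
  have hfatou := E.fatou (fun n t => ∑ k ∈ Finset.range (n+1), w k t)
    (fun t => ∑' k, w k t) hmono htend
  exact le_of_tendsto hfatou (Filter.Eventually.of_forall fun n =>
    (rho_sum_le E n w).trans (hS n))

lemma sum_pow_le_two {x : ℝ≥0∞} (hx : x ≤ 1/2) (m : ℕ) :
    ∑ k ∈ Finset.range m, x^k ≤ 2 := by
  refine le_trans (ENNReal.sum_le_tsum _) ?_
  rw [ENNReal.tsum_geometric]
  have h1 : (1:ℝ≥0∞) - x ≥ 1 - 1/2 := tsub_le_tsub_left hx 1
  have h2 : (1:ℝ≥0∞) - 1/2 = 1/2 := by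
    rw [ENNReal.sub_eq_of_eq_add (by norm_num)]
    exact (ENNReal.add_halves 1).symm
  rw [h2] at h1
  calc ((1:ℝ≥0∞) - x)⁻¹ ≤ (1/2 : ℝ≥0∞)⁻¹ := ENNReal.inv_le_inv.2 h1
    _ = 2 := by simp

lemma rho_tsum_geom (E : RIQBFS) (w : ℕ → ℝ → ℝ≥0∞) {D r : ℝ≥0∞}
    (hw : ∀ k, E.ρ (w k) ≤ D * r ^ k) (hr : ENNReal.ofReal E.C * r ≤ 1/2) :
    E.ρ (fun t => ∑' k, w k t) ≤ ENNReal.ofReal E.C * D * 2 := by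
  refine rho_tsum_le E w _ fun n => ?_
  calc ∑ k ∈ Finset.range (n+1), (ENNReal.ofReal E.C)^(k+1) * E.ρ (w k)
      ≤ ∑ k ∈ Finset.range (n+1), (ENNReal.ofReal E.C)^(k+1) * (D * r ^ k) :=
        Finset.sum_le_sum fun k _ => mul_le_mul_right (hw k) _
    _ = (ENNReal.ofReal E.C * D) * ∑ k ∈ Finset.range (n+1), (ENNReal.ofReal E.C * r) ^ k := by
        rw [Finset.mul_sum]
        refine Finset.sum_congr rfl fun k _ => ?_
        rw [mul_pow, pow_succ]
        ring
    _ ≤ (ENNReal.ofReal E.C * D) * 2 := mul_le_mul_right (sum_pow_le_two hr _) _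
    _ = ENNReal.ofReal E.C * D * 2 := rfl

lemma geom_cond {CE B ε : ℝ} (hCE : 1 ≤ CE) (hε : 0 < ε) (hB1 : 1 < B)
    (hB : (2*CE)^(1/ε) ≤ B) :
    ENNReal.ofReal CE * ENNReal.ofReal (B ^ (-ε)) ≤ 1/2 := by
  have hB0 : (0:ℝ) < B := lt_trans one_pos hB1
  have hBε : 2*CE ≤ B^ε := by
    calc 2*CE = ((2*CE)^(1/ε))^ε := by
          rw [← Real.rpow_mul (by linarith : (0:ℝ) ≤ 2*CE), one_div,
            inv_mul_cancel₀ hε.ne', Real.rpow_one]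
      _ ≤ B^ε := Real.rpow_le_rpow (Real.rpow_nonneg (by linarith) _) hB hε.le
  have hBεpos : (0:ℝ) < B^ε := Real.rpow_pos_of_pos hB0 _
  have hreal : CE * B^(-ε) ≤ 1/2 := by
    rw [Real.rpow_neg hB0.le, mul_inv_le_iff₀ hBεpos]
    linarith
  calc ENNReal.ofReal CE * ENNReal.ofReal (B ^ (-ε))
      = ENNReal.ofReal (CE * B ^ (-ε)) := (ENNReal.ofReal_mul (by linarith)).symm
    _ ≤ ENNReal.ofReal (1/2) := ENNReal.ofReal_le_ofReal hreal
    _ ≤ 1/2 := by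
        rw [ENNReal.ofReal_div_of_pos two_pos, ENNReal.ofReal_one, ENNReal.ofReal_ofNat]

lemma exists_cover_small {B u : ℝ} (hB : 2 ≤ B) (hu0 : 0 < u) (hu1 : u ≤ 1) :
    ∃ k : ℕ, B ^ (-((k:ℝ)+1)) < u ∧ u < B ^ (1-(k:ℝ)) := by
  classical
  have hB1 : (1:ℝ) < B := by linarith
  have hB0 : (0:ℝ) < B := by linarith
  have hex : ∃ k : ℕ, B ^ (-((k:ℝ)+1)) < u := by
    obtain ⟨n, hn⟩ := exists_pow_lt_of_lt_one hu0 (by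
      rw [inv_lt_one_iff₀]; right; exact hB1 : B⁻¹ < 1)
    refine ⟨n, lt_of_le_of_lt ?_ hn⟩
    rw [← Real.rpow_natCast (B⁻¹) n, ← Real.rpow_neg_one B, ← Real.rpow_mul hB0.le]
    apply Real.rpow_le_rpow_of_exponent_le hB1.le
    push_cast
    linarith
  set k := Nat.find hex with hk
  refine ⟨k, Nat.find_spec hex, ?_⟩
  rcases Nat.eq_zero_or_pos k with h0 | hpos
  · rw [h0]
    push_cast
    rw [sub_zero, Real.rpow_one]
    linarith
  · have hmin := Nat.find_min hex (m := k - 1) (by omega)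
    push_neg at hmin
    have hcast : -((((k:ℕ) - 1 : ℕ):ℝ)+1) = -(k:ℝ) := by
      have : ((k - 1 : ℕ) : ℝ) = (k:ℝ) - 1 := by
        push_cast [Nat.cast_sub hpos]
        ring
      rw [this]; ring
    rw [hcast] at hmin
    calc u ≤ B ^ (-(k:ℝ)) := hmin
      _ < B ^ (1-(k:ℝ)) := by
        rw [Real.rpow_lt_rpow_left_iff hB1]
        linarith

lemma exists_cover_large {B u : ℝ} (hB : 2 ≤ B) (hu : 1 < u) :
    ∃ k : ℕ, B ^ ((k:ℝ)) ≤ u ∧ u < B ^ ((k:ℝ)+1) := by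
  classical
  have hB1 : (1:ℝ) < B := by linarith
  have hB0 : (0:ℝ) < B := by linarith
  have hex : ∃ k : ℕ, u < B ^ ((k:ℝ)+1) := by
    obtain ⟨n, hn⟩ := pow_unbounded_of_one_lt u hB1
    refine ⟨n, lt_of_lt_of_le hn ?_⟩
    rw [← Real.rpow_natCast B n]
    apply Real.rpow_le_rpow_of_exponent_le hB1.le
    linarith
  set k := Nat.find hex with hk
  refine ⟨k, ?_, Nat.find_spec hex⟩
  rcases Nat.eq_zero_or_pos k with h0 | hpos
  · rw [h0]
    push_cast
    rw [Real.rpow_zero]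
    linarith
  · have hmin := Nat.find_min hex (m := k - 1) (by omega)
    push_neg at hmin
    have hcast : ((((k:ℕ) - 1 : ℕ):ℝ)+1) = (k:ℝ) := by
      have : ((k - 1 : ℕ) : ℝ) = (k:ℝ) - 1 := by
        push_cast [Nat.cast_sub hpos]
        ring
      rw [this]; ring
    rw [hcast] at hmin
    exact hmin


lemma dfn_eq_restrict {f : ℝ → ℝ} (hf : Measurable f) (lam : ℝ≥0∞) :
    dfn f lam = (volume.restrict (Set.Ioi (0:ℝ))) {s | lam < ENNReal.ofReal |f s|} := by
  have hms : MeasurableSet {s : ℝ | lam < ENNReal.ofReal |f s|} :=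
    measurableSet_lt measurable_const (hf.abs.ennreal_ofReal)
  rw [Measure.restrict_apply hms]
  unfold dfn
  congr 1
  ext s
  simp only [Set.mem_setOf_eq, Set.mem_inter_iff, Set.mem_Ioi]
  tauto

lemma eLpNorm_rpow_eq {f : ℝ → ℝ} {r : ℝ} (hr : 0 < r) (μ : Measure ℝ) :
    eLpNorm f (ENNReal.ofReal r) μ ^ r = ∫⁻ s, ((‖f s‖₊ : ℝ≥0∞)) ^ r ∂μ := by
  rw [eLpNorm_eq_lintegral_rpow_enorm_toReal (by simp [hr] : ENNReal.ofReal r ≠ 0)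
    ENNReal.ofReal_ne_top]
  rw [ENNReal.toReal_ofReal hr.le, ← ENNReal.rpow_mul, one_div,
    inv_mul_cancel₀ hr.ne', ENNReal.rpow_one]
  rfl

lemma chebyshev_rearr {f : ℝ → ℝ} (hf : Measurable f) {r m t : ℝ} (hr : 0 < r)
    (hm : 0 < m) (ht : 0 < t)
    (hle : eLpNorm f (ENNReal.ofReal r) (volume.restrict (Set.Ioi (0:ℝ))) ≤ ENNReal.ofReal m) :
    rearr f t ≤ ENNReal.ofReal (m * t ^ (-(1/r))) := by
  refine rearr_le_iff.2 ?_
  set lam := ENNReal.ofReal (m * t ^ (-(1/r))) with hlam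
  have hlamr : (0:ℝ) < m * t ^ (-(1/r)) := by positivity
  have hlam0 : lam ≠ 0 := by
    simp only [hlam, ne_eq, ENNReal.ofReal_eq_zero, not_le]
    exact hlamr
  have hlamtop : lam ≠ ⊤ := ENNReal.ofReal_ne_top
  have hcheb : lam ^ r * dfn f lam ≤ ENNReal.ofReal (m ^ r) := by
    have h2 : {s : ℝ | lam < ENNReal.ofReal |f s|} ⊆
        {s : ℝ | lam ^ r ≤ (‖f s‖₊ : ℝ≥0∞) ^ r} := by
      intro s hs
      rw [Set.mem_setOf_eq, ← enorm_eq_nnnorm, Real.enorm_eq_ofReal_abs]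
      exact ENNReal.rpow_le_rpow (le_of_lt hs) hr.le
    calc lam ^ r * dfn f lam
        ≤ lam ^ r * (volume.restrict (Set.Ioi (0:ℝ)))
            {s : ℝ | lam ^ r ≤ (‖f s‖₊ : ℝ≥0∞) ^ r} := by
          rw [dfn_eq_restrict hf]
          exact mul_le_mul_right (measure_mono h2) _
      _ ≤ ∫⁻ s, ((‖f s‖₊ : ℝ≥0∞)) ^ r ∂(volume.restrict (Set.Ioi (0:ℝ))) :=
          mul_meas_ge_le_lintegral₀ (hf.enorm.pow_const r).aemeasurable (lam ^ r)
      _ = eLpNorm f (ENNReal.ofReal r) (volume.restrict (Set.Ioi (0:ℝ))) ^ r :=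
          (eLpNorm_rpow_eq hr _).symm
      _ ≤ ENNReal.ofReal m ^ r := ENNReal.rpow_le_rpow hle hr.le
      _ = ENNReal.ofReal (m ^ r) := ENNReal.ofReal_rpow_of_pos hm
  have hlampow : lam ^ r = ENNReal.ofReal (m ^ r * t⁻¹) := by
    rw [hlam, ENNReal.ofReal_rpow_of_pos hlamr]
    congr 1
    rw [Real.mul_rpow hm.le (Real.rpow_nonneg ht.le _), ← Real.rpow_mul ht.le]
    congr 1
    rw [← Real.rpow_neg_one t]
    congr 1
    field_simp
  have hdiv : dfn f lam ≤ ENNReal.ofReal (m ^ r) / lam ^ r := by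
    rw [ENNReal.le_div_iff_mul_le (Or.inl (by simp [hlampow]; positivity))
      (Or.inl (by simp [hlampow]))]
    rw [mul_comm]
    exact hcheb
  refine hdiv.trans (le_of_eq ?_)
  rw [hlampow, ← ENNReal.ofReal_div_of_pos (by positivity)]
  congr 1
  have hmr : (0:ℝ) < m ^ r := Real.rpow_pos_of_pos hm r
  field_simp

lemma rearr_le_top_norm {f : ℝ → ℝ} (hf : Measurable f) (t : ℝ) :
    rearr f t ≤ eLpNorm f ⊤ (volume.restrict (Set.Ioi (0:ℝ))) := by
  refine rearr_le_of_dfn_le ?_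
  rw [dfn_eq_restrict hf]
  have h := ae_le_essSup (μ := volume.restrict (Set.Ioi (0:ℝ)))
    (f := fun s => (‖f s‖₊ : ℝ≥0∞))
  have h0 : (volume.restrict (Set.Ioi (0:ℝ)))
      {s : ℝ | eLpNorm f ⊤ (volume.restrict (Set.Ioi (0:ℝ))) < ENNReal.ofReal |f s|} = 0 := by
    refine measure_mono_null ?_ (ae_iff.1 h)
    intro s hs
    rw [Set.mem_setOf_eq] at hs ⊢
    rw [eLpNorm_exponent_top, eLpNormEssSup] at hs
    rw [not_le, ← enorm_eq_nnnorm, Real.enorm_eq_ofReal_abs]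
    exact hs
  rw [h0]
  exact zero_le'

lemma rearr_zero_of_ae_zero {f : ℝ → ℝ} (hf : Measurable f)
    (h : f =ᵐ[volume.restrict (Set.Ioi (0:ℝ))] 0) :
    rearr f = fun _ => 0 := by
  have hd : dfn f 0 = 0 := by
    rw [dfn_eq_restrict hf]
    refine measure_mono_null ?_ (ae_iff.1 h)
    intro s hs
    rw [Set.mem_setOf_eq] at hs ⊢
    intro hzero
    rw [hzero] at hs
    simp at hs
  funext t
  refine le_antisymm (rearr_le_of_dfn_le ?_) (zero_le')
  rw [hd]
  exact zero_le'

lemma ae_zero_of_rho_zero (E : RIQBFS) {f : ℝ → ℝ} (hf : Measurable f)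
    (h : E.ρ (rearr f) = 0) : f =ᵐ[volume.restrict (Set.Ioi (0:ℝ))] 0 := by
  have hae : ∀ᵐ t ∂(volume.restrict (Set.Ioi (0:ℝ))), rearr f t = 0 := (E.eq_zero_iff _).1 h
  have hd : dfn f 0 = 0 := by
    by_contra hd0
    obtain ⟨rr, hrnn, hr1, hr2⟩ := ENNReal.lt_iff_exists_real_btwn.1 (pos_iff_ne_zero.2 hd0)
    have hrpos : 0 < rr := ENNReal.ofReal_pos.1 hr1
    have hnull := ae_iff.1 hae
    have hIoo : (volume.restrict (Set.Ioi (0:ℝ))) (Set.Ioo 0 rr) ≠ 0 := by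
      rw [Measure.restrict_apply measurableSet_Ioo,
        Set.inter_eq_left.2 (fun x hx => hx.1), Real.volume_Ioo]
      simp [hrpos]
    have hex : ∃ t ∈ Set.Ioo (0:ℝ) rr, rearr f t = 0 := by
      by_contra hcon
      push_neg at hcon
      exact hIoo (measure_mono_null (fun t ht => hcon t ht) hnull)
    obtain ⟨t, ht, hzero⟩ := hex
    have hle2 := rearr_le_iff.1 hzero.le
    have h2 : ENNReal.ofReal t < ENNReal.ofReal rr :=
      (ENNReal.ofReal_lt_ofReal_iff hrpos).2 ht.2
    exact absurd ((hle2.trans_lt h2).trans hr2) (lt_irrefl _)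
  have hnull2 : (volume.restrict (Set.Ioi (0:ℝ))) {s | ¬ f s = 0} = 0 := by
    rw [dfn_eq_restrict hf] at hd
    refine measure_mono_null ?_ hd
    intro s hs
    rw [Set.mem_setOf_eq] at hs ⊢
    simpa using abs_pos.2 hs
  exact ae_iff.2 hnull2


lemma rho_piece (E : RIQBFS) (a b : ℝ) :
    E.ρ (fun u => ENNReal.ofReal a *
        Set.indicator (Set.Ioo 0 b) (fun _ => (1:ℝ≥0∞)) u) = ENNReal.ofReal a * Phi E b :=
  rho_smul E ENNReal.ofReal_ne_top _

lemma ofReal_rpow_pow {B ε : ℝ} (hB0 : 0 < B) (k : ℕ) :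
    (ENNReal.ofReal (B ^ (-ε))) ^ k = ENNReal.ofReal (B ^ (-ε * (k:ℝ))) := by
  rw [← ENNReal.ofReal_pow (Real.rpow_nonneg hB0.le _), ← Real.rpow_natCast (B ^ (-ε)) k,
    ← Real.rpow_mul hB0.le]

lemma w_small_bound (E : RIQBFS) {q c' p c r1 m B : ℝ}
    (hc : 0 < c) (hc' : 0 < c') (hq : 0 < q) (hr1 : 0 < r1) (hp : 0 < p)
    (hm : 0 ≤ m) (hB : 2 ≤ B)
    (hdilL : ∀ a : ℝ, 0 < a → a < 1 → dilNorm E a ≤ ENNReal.ofReal (c * a ^ (-(1 / p))))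
    (hdilU : ∀ a : ℝ, 1 ≤ a → dilNorm E a ≤ ENNReal.ofReal (c' * a ^ (-(1 / q))))
    (k : ℕ) :
    E.ρ (fun u => ENNReal.ofReal (m * B ^ (((k:ℝ)+1)/r1)) *
        Set.indicator (Set.Ioo 0 (B ^ (1-(k:ℝ)))) (fun _ => (1:ℝ≥0∞)) u)
      ≤ (ENNReal.ofReal (m * ((max c 1 + c') * B ^ (1/r1 + 1/p + 1/q))) * Phi E 1) *
        (ENNReal.ofReal (B ^ (-(1/q - 1/r1)))) ^ k := by
  have hB0 : (0:ℝ) < B := by linarith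
  have hB1 : (1:ℝ) ≤ B := by linarith
  rw [rho_piece, ofReal_rpow_pow hB0]
  have hRHS : (ENNReal.ofReal (m * ((max c 1 + c') * B ^ (1/r1 + 1/p + 1/q))) * Phi E 1) *
      ENNReal.ofReal (B ^ (-(1/q - 1/r1) * (k:ℝ))) =
      ENNReal.ofReal (m * ((max c 1 + c') *
        B ^ (1/r1 + 1/p + 1/q + (-(1/q - 1/r1) * (k:ℝ))))) * Phi E 1 := by
    rw [mul_comm _ (Phi E 1), mul_assoc, mul_comm (Phi E 1) _, ← mul_assoc,
      ← ENNReal.ofReal_mul (by positivity)]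
    congr 2
    rw [Real.rpow_add hB0 (1/r1 + 1/p + 1/q) (-(1/q - 1/r1) * (k:ℝ))]
    ring
  rw [hRHS]
  -- bound Phi E (B ^ (1 - k))
  rcases Nat.eq_zero_or_pos k with hk0 | hkpos
  · subst hk0
    push_cast
    rw [sub_zero, Real.rpow_one]
    have hPhi := Phi_le_of_lower E hc hdilL hB1
    calc ENNReal.ofReal (m * B ^ ((0+1)/r1)) * Phi E B
        ≤ ENNReal.ofReal (m * B ^ ((0+1)/r1)) *
          (ENNReal.ofReal (max c 1 * B ^ (1/p)) * Phi E 1) := mul_le_mul_right hPhi _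
      _ = ENNReal.ofReal (m * B ^ ((0+1)/r1) * (max c 1 * B ^ (1/p))) * Phi E 1 := by
          rw [← mul_assoc, ← ENNReal.ofReal_mul (by positivity)]
      _ ≤ ENNReal.ofReal (m * ((max c 1 + c') *
            B ^ (1/r1 + 1/p + 1/q + (-(1/q - 1/r1) * (0:ℝ))))) * Phi E 1 := by
          refine mul_le_mul_left (ENNReal.ofReal_le_ofReal ?_) _
          have he : B ^ ((0+1)/r1) * B ^ (1/p) = B ^ (1/r1 + 1/p) := by
            rw [← Real.rpow_add hB0]
            norm_num
          calc m * B ^ ((0+1)/r1) * (max c 1 * B ^ (1/p))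
              = m * (max c 1 * (B ^ ((0+1)/r1) * B ^ (1/p))) := by ring
            _ = m * (max c 1 * B ^ (1/r1 + 1/p)) := by rw [he]
            _ ≤ m * ((max c 1 + c') * B ^ (1/r1 + 1/p + 1/q + (-(1/q - 1/r1) * (0:ℝ)))) := by
                refine mul_le_mul_of_nonneg_left ?_ hm
                refine mul_le_mul (by linarith [le_max_left c 1, le_max_right c 1]) ?_
                  (Real.rpow_nonneg hB0.le _) (by positivity)
                refine Real.rpow_le_rpow_of_exponent_le hB1 ?_
                have : (0:ℝ) < 1/q := by positivity
                linarith
  · -- k ≥ 1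
    have hk1 : (1:ℝ) ≤ (k:ℝ) := by exact_mod_cast hkpos
    have hsup0 : (0:ℝ) < B ^ (1-(k:ℝ)) := Real.rpow_pos_of_pos hB0 _
    have hsup1 : B ^ (1-(k:ℝ)) ≤ 1 :=
      Real.rpow_le_one_of_one_le_of_nonpos hB1 (by linarith)
    have hPhi := Phi_le_of_upper E hc' hdilU hsup0 hsup1
    have hexp : (B ^ (1-(k:ℝ))) ^ (1/q) = B ^ ((1-(k:ℝ))/q) := by
      rw [← Real.rpow_mul hB0.le]
      congr 1
      ring
    calc ENNReal.ofReal (m * B ^ (((k:ℝ)+1)/r1)) * Phi E (B ^ (1-(k:ℝ)))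
        ≤ ENNReal.ofReal (m * B ^ (((k:ℝ)+1)/r1)) *
          (ENNReal.ofReal (c' * B ^ ((1-(k:ℝ))/q)) * Phi E 1) := by
          refine mul_le_mul_right (hPhi.trans (le_of_eq ?_)) _
          rw [hexp]
      _ = ENNReal.ofReal (m * B ^ (((k:ℝ)+1)/r1) * (c' * B ^ ((1-(k:ℝ))/q))) * Phi E 1 := by
          rw [← mul_assoc, ← ENNReal.ofReal_mul (by positivity)]
      _ ≤ ENNReal.ofReal (m * ((max c 1 + c') *
            B ^ (1/r1 + 1/p + 1/q + (-(1/q - 1/r1) * (k:ℝ))))) * Phi E 1 := by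
          refine mul_le_mul_left (ENNReal.ofReal_le_ofReal ?_) _
          have he : B ^ (((k:ℝ)+1)/r1) * B ^ ((1-(k:ℝ))/q) =
              B ^ (((k:ℝ)+1)/r1 + (1-(k:ℝ))/q) := (Real.rpow_add hB0 _ _).symm
          calc m * B ^ (((k:ℝ)+1)/r1) * (c' * B ^ ((1-(k:ℝ))/q))
              = m * (c' * (B ^ (((k:ℝ)+1)/r1) * B ^ ((1-(k:ℝ))/q))) := by ring
            _ = m * (c' * B ^ (((k:ℝ)+1)/r1 + (1-(k:ℝ))/q)) := by rw [he]
            _ ≤ m * ((max c 1 + c') *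
                B ^ (1/r1 + 1/p + 1/q + (-(1/q - 1/r1) * (k:ℝ)))) := by
                refine mul_le_mul_of_nonneg_left ?_ hm
                refine mul_le_mul (by linarith [le_max_left c 1, le_max_right c 1]) ?_
                  (Real.rpow_nonneg hB0.le _) (by positivity)
                refine Real.rpow_le_rpow_of_exponent_le hB1 ?_
                have h1p : (0:ℝ) < 1/p := by positivity
                have heq : ((k:ℝ)+1)/r1 + (1-(k:ℝ))/q =
                    1/r1 + 1/q + (-(1/q - 1/r1) * (k:ℝ)) := by
                  field_simp
                  ring
                rw [heq]
                linarith

lemma w_large_bound (E : RIQBFS) {p0 p c m B : ℝ}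
    (hp0 : 0 < p0) (hpp0 : p0 < p) (hc : 0 < c) (hm : 0 ≤ m) (hB : 2 ≤ B)
    (hdilL : ∀ a : ℝ, 0 < a → a < 1 → dilNorm E a ≤ ENNReal.ofReal (c * a ^ (-(1 / p))))
    (k : ℕ) :
    E.ρ (fun u => ENNReal.ofReal (m * B ^ (-(k:ℝ)/p0)) *
        Set.indicator (Set.Ioo 0 (B ^ ((k:ℝ)+1))) (fun _ => (1:ℝ≥0∞)) u)
      ≤ (ENNReal.ofReal (m * (max c 1 * B ^ (1/p))) * Phi E 1) *
        (ENNReal.ofReal (B ^ (-(1/p0 - 1/p)))) ^ k := by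
  have hB0 : (0:ℝ) < B := by linarith
  have hB1 : (1:ℝ) ≤ B := by linarith
  have hp : (0:ℝ) < p := hp0.trans hpp0
  rw [rho_piece, ofReal_rpow_pow hB0]
  have hRHS : (ENNReal.ofReal (m * (max c 1 * B ^ (1/p))) * Phi E 1) *
      ENNReal.ofReal (B ^ (-(1/p0 - 1/p) * (k:ℝ))) =
      ENNReal.ofReal (m * (max c 1 *
        B ^ (1/p + (-(1/p0 - 1/p) * (k:ℝ))))) * Phi E 1 := by
    rw [mul_comm _ (Phi E 1), mul_assoc, mul_comm (Phi E 1) _, ← mul_assoc,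
      ← ENNReal.ofReal_mul (by positivity)]
    congr 2
    rw [Real.rpow_add hB0 (1/p) (-(1/p0 - 1/p) * (k:ℝ))]
    ring
  rw [hRHS]
  have hbig : (1:ℝ) ≤ B ^ ((k:ℝ)+1) :=
    Real.one_le_rpow hB1 (by positivity)
  have hPhi := Phi_le_of_lower E hc hdilL hbig
  have hexp : (B ^ ((k:ℝ)+1)) ^ (1/p) = B ^ (((k:ℝ)+1)/p) := by
    rw [← Real.rpow_mul hB0.le]
    congr 1
    ring
  calc ENNReal.ofReal (m * B ^ (-(k:ℝ)/p0)) * Phi E (B ^ ((k:ℝ)+1))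
      ≤ ENNReal.ofReal (m * B ^ (-(k:ℝ)/p0)) *
        (ENNReal.ofReal (max c 1 * B ^ (((k:ℝ)+1)/p)) * Phi E 1) := by
        refine mul_le_mul_right (hPhi.trans (le_of_eq ?_)) _
        rw [hexp]
    _ = ENNReal.ofReal (m * B ^ (-(k:ℝ)/p0) * (max c 1 * B ^ (((k:ℝ)+1)/p))) * Phi E 1 := by
        rw [← mul_assoc, ← ENNReal.ofReal_mul (by positivity)]
    _ ≤ ENNReal.ofReal (m * (max c 1 *
          B ^ (1/p + (-(1/p0 - 1/p) * (k:ℝ))))) * Phi E 1 := by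
        refine mul_le_mul_left (ENNReal.ofReal_le_ofReal ?_) _
        have he : B ^ (-(k:ℝ)/p0) * B ^ (((k:ℝ)+1)/p) =
            B ^ (-(k:ℝ)/p0 + ((k:ℝ)+1)/p) := (Real.rpow_add hB0 _ _).symm
        calc m * B ^ (-(k:ℝ)/p0) * (max c 1 * B ^ (((k:ℝ)+1)/p))
            = m * (max c 1 * (B ^ (-(k:ℝ)/p0) * B ^ (((k:ℝ)+1)/p))) := by ring
          _ = m * (max c 1 * B ^ (-(k:ℝ)/p0 + ((k:ℝ)+1)/p)) := by rw [he]
          _ ≤ m * (max c 1 * B ^ (1/p + (-(1/p0 - 1/p) * (k:ℝ)))) := by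
              refine mul_le_mul_of_nonneg_left ?_ hm
              refine mul_le_mul_of_nonneg_left ?_ (by positivity)
              refine Real.rpow_le_rpow_of_exponent_le hB1 (le_of_eq ?_)
              field_simp
              ring


lemma cov_large {f : ℝ → ℝ} {m B p0 : ℝ} (hB : 2 ≤ B) (hp0 : 0 < p0) (hm : 0 ≤ m)
    (hcheb : ∀ u : ℝ, 0 < u → rearr f u ≤ ENNReal.ofReal (m * u ^ (-(1/p0))))
    {u : ℝ} (hu : 1 < u) :
    rearr f u ≤ ∑' k : ℕ, ENNReal.ofReal (m * B ^ (-(k:ℝ)/p0)) *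
        Set.indicator (Set.Ioo 0 (B ^ ((k:ℝ)+1))) (fun _ => (1:ℝ≥0∞)) u := by
  have hB0 : (0:ℝ) < B := by linarith
  obtain ⟨k, hk1, hk2⟩ := exists_cover_large hB hu
  refine le_trans ?_ (ENNReal.le_tsum k)
  have hind : Set.indicator (Set.Ioo 0 (B ^ ((k:ℝ)+1))) (fun _ => (1:ℝ≥0∞)) u = 1 :=
    Set.indicator_of_mem (Set.mem_Ioo.2 ⟨by linarith, hk2⟩) _
  rw [hind, mul_one]
  refine (hcheb u (by linarith)).trans (ENNReal.ofReal_le_ofReal ?_)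
  refine mul_le_mul_of_nonneg_left ?_ hm
  have hx : (0:ℝ) < B ^ ((k:ℝ)) := Real.rpow_pos_of_pos hB0 _
  have h2 : u ^ (-(1/p0)) ≤ (B ^ ((k:ℝ))) ^ (-(1/p0)) :=
    Real.rpow_le_rpow_of_nonpos hx hk1 (by rw [neg_nonpos]; positivity)
  refine h2.trans (le_of_eq ?_)
  rw [← Real.rpow_mul hB0.le]
  congr 1
  ring

lemma cov_small {f : ℝ → ℝ} {m B r1 : ℝ} (hB : 2 ≤ B) (hr1 : 0 < r1) (hm : 0 ≤ m)
    (hcheb : ∀ u : ℝ, 0 < u → rearr f u ≤ ENNReal.ofReal (m * u ^ (-(1/r1))))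
    {u : ℝ} (hu : 0 < u) (hu1 : u ≤ 1) :
    rearr f u ≤ ∑' k : ℕ, ENNReal.ofReal (m * B ^ (((k:ℝ)+1)/r1)) *
        Set.indicator (Set.Ioo 0 (B ^ (1-(k:ℝ)))) (fun _ => (1:ℝ≥0∞)) u := by
  have hB0 : (0:ℝ) < B := by linarith
  obtain ⟨k, hk1, hk2⟩ := exists_cover_small hB hu hu1
  refine le_trans ?_ (ENNReal.le_tsum k)
  have hind : Set.indicator (Set.Ioo 0 (B ^ (1-(k:ℝ)))) (fun _ => (1:ℝ≥0∞)) u = 1 :=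
    Set.indicator_of_mem (Set.mem_Ioo.2 ⟨hu, hk2⟩) _
  rw [hind, mul_one]
  refine (hcheb u hu).trans (ENNReal.ofReal_le_ofReal ?_)
  refine mul_le_mul_of_nonneg_left ?_ hm
  have hx : (0:ℝ) < B ^ (-((k:ℝ)+1)) := Real.rpow_pos_of_pos hB0 _
  have h2 : u ^ (-(1/r1)) ≤ (B ^ (-((k:ℝ)+1))) ^ (-(1/r1)) :=
    Real.rpow_le_rpow_of_nonpos hx hk1.le (by rw [neg_nonpos]; positivity)
  refine h2.trans (le_of_eq ?_)
  rw [← Real.rpow_mul hB0.le]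
  congr 1
  field_simp

lemma w_top_bound (E : RIQBFS) {p0 p c m B : ℝ}
    (hp0 : 0 < p0) (hpp0 : p0 < p) (hc : 0 < c) (hm : 0 ≤ m) (hB : 2 ≤ B)
    (hdilL : ∀ a : ℝ, 0 < a → a < 1 → dilNorm E a ≤ ENNReal.ofReal (c * a ^ (-(1 / p))))
    (k : ℕ) :
    E.ρ ((fun k => if k = 0 then
        (fun u => ENNReal.ofReal m * Set.indicator (Set.Ioo 0 B) (fun _ => (1:ℝ≥0∞)) u)
        else (fun _ => 0)) k)
      ≤ (ENNReal.ofReal (m * (max c 1 * B ^ (1/p))) * Phi E 1) *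
        (ENNReal.ofReal (B ^ (-(1/p0 - 1/p)))) ^ k := by
  have hB1 : (1:ℝ) ≤ B := by linarith
  rcases Nat.eq_zero_or_pos k with hk0 | hkpos
  · subst hk0
    have heval : ((fun k : ℕ => if k = 0 then
        (fun u => ENNReal.ofReal m * Set.indicator (Set.Ioo 0 B) (fun _ => (1:ℝ≥0∞)) u)
        else (fun _ => 0)) 0) =
        fun u => ENNReal.ofReal m * Set.indicator (Set.Ioo 0 B) (fun _ => (1:ℝ≥0∞)) u := by
      simp
    rw [heval, rho_piece, pow_zero, mul_one]
    have hPhi := Phi_le_of_lower E hc hdilL hB1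
    calc ENNReal.ofReal m * Phi E B
        ≤ ENNReal.ofReal m * (ENNReal.ofReal (max c 1 * B ^ (1/p)) * Phi E 1) :=
          mul_le_mul_right hPhi _
      _ = ENNReal.ofReal (m * (max c 1 * B ^ (1/p))) * Phi E 1 := by
          rw [← mul_assoc, ← ENNReal.ofReal_mul hm]
  · have heval : ((fun k : ℕ => if k = 0 then
        (fun u => ENNReal.ofReal m * Set.indicator (Set.Ioo 0 B) (fun _ => (1:ℝ≥0∞)) u)
        else (fun _ => 0)) k) = (fun _ => (0:ℝ≥0∞)) := by
      simp [Nat.pos_iff_ne_zero.1 hkpos]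
    rw [heval, rho_zero]
    exact zero_le'

lemma S_small_bound (E : RIQBFS) {q c' p c r1 m B : ℝ}
    (hc : 0 < c) (hc' : 0 < c') (hq : 0 < q) (hr1 : 0 < r1) (hp : 0 < p)
    (hm : 0 ≤ m) (hB : 2 ≤ B)
    (hdilL : ∀ a : ℝ, 0 < a → a < 1 → dilNorm E a ≤ ENNReal.ofReal (c * a ^ (-(1 / p))))
    (hdilU : ∀ a : ℝ, 1 ≤ a → dilNorm E a ≤ ENNReal.ofReal (c' * a ^ (-(1 / q))))
    (hgeom : ENNReal.ofReal E.C * ENNReal.ofReal (B ^ (-(1/q - 1/r1))) ≤ 1/2) :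
    E.ρ (fun u => ∑' k : ℕ, ENNReal.ofReal (m * B ^ (((k:ℝ)+1)/r1)) *
        Set.indicator (Set.Ioo 0 (B ^ (1-(k:ℝ)))) (fun _ => (1:ℝ≥0∞)) u)
      ≤ ENNReal.ofReal E.C *
        (ENNReal.ofReal (m * ((max c 1 + c') * B ^ (1/r1 + 1/p + 1/q))) * Phi E 1) * 2 :=
  rho_tsum_geom E _ (w_small_bound E hc hc' hq hr1 hp hm hB hdilL hdilU) hgeom

lemma S_large_bound (E : RIQBFS) {p0 p c m B : ℝ}
    (hp0 : 0 < p0) (hpp0 : p0 < p) (hc : 0 < c) (hm : 0 ≤ m) (hB : 2 ≤ B)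
    (hdilL : ∀ a : ℝ, 0 < a → a < 1 → dilNorm E a ≤ ENNReal.ofReal (c * a ^ (-(1 / p))))
    (hgeom : ENNReal.ofReal E.C * ENNReal.ofReal (B ^ (-(1/p0 - 1/p))) ≤ 1/2) :
    E.ρ (fun u => ∑' k : ℕ, ENNReal.ofReal (m * B ^ (-(k:ℝ)/p0)) *
        Set.indicator (Set.Ioo 0 (B ^ ((k:ℝ)+1))) (fun _ => (1:ℝ≥0∞)) u)
      ≤ ENNReal.ofReal E.C *
        (ENNReal.ofReal (m * (max c 1 * B ^ (1/p))) * Phi E 1) * 2 :=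
  rho_tsum_geom E _ (w_large_bound E hp0 hpp0 hc hm hB hdilL) hgeom

lemma S_top_bound (E : RIQBFS) {p0 p c m B : ℝ}
    (hp0 : 0 < p0) (hpp0 : p0 < p) (hc : 0 < c) (hm : 0 ≤ m) (hB : 2 ≤ B)
    (hdilL : ∀ a : ℝ, 0 < a → a < 1 → dilNorm E a ≤ ENNReal.ofReal (c * a ^ (-(1 / p))))
    (hgeom : ENNReal.ofReal E.C * ENNReal.ofReal (B ^ (-(1/p0 - 1/p))) ≤ 1/2) :
    E.ρ (fun u => ∑' k : ℕ, (fun k => if k = 0 then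
        (fun u => ENNReal.ofReal m * Set.indicator (Set.Ioo 0 B) (fun _ => (1:ℝ≥0∞)) u)
        else (fun _ => 0)) k u)
      ≤ ENNReal.ofReal E.C *
        (ENNReal.ofReal (m * (max c 1 * B ^ (1/p))) * Phi E 1) * 2 :=
  rho_tsum_geom E _ (w_top_bound E hp0 hpp0 hc hm hB hdilL) hgeom


lemma K_ne_top_aux (E : RIQBFS) (A1 A2 : ℝ) :
    ENNReal.ofReal E.C * (ENNReal.ofReal E.C * (ENNReal.ofReal A1 * Phi E 1) * 2 +
      ENNReal.ofReal E.C * (ENNReal.ofReal A2 * Phi E 1) * 2) ≠ ⊤ := by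
  refine ENNReal.mul_ne_top ENNReal.ofReal_ne_top (ENNReal.add_ne_top.2 ⟨?_, ?_⟩) <;>
  · exact ENNReal.mul_ne_top (ENNReal.mul_ne_top ENNReal.ofReal_ne_top
      (ENNReal.mul_ne_top ENNReal.ofReal_ne_top (Phi_lt_top E 1).ne)) (by simp)

lemma final_const_step {K M : ℝ≥0∞} (hK : K ≠ ⊤) (h : K * M = K * M) :
    K * M ≤ ENNReal.ofReal (K.toReal + 1) * M := by
  refine mul_le_mul_left ?_ _
  conv_lhs => rw [← ENNReal.ofReal_toReal hK]
  exact ENNReal.ofReal_le_ofReal (by linarith)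

lemma part2_bound (E : RIQBFS) (p0 : ℝ) (p1 : ℝ≥0∞) (hp0 : 0 < p0)
    (hp0E : ENNReal.ofReal p0 < lowerBoyd E)
    (hp1 : (upperBoyd E < p1 ∧ p1 ≠ ⊤) ∨ p1 = ⊤) :
    ∃ C : ℝ, 0 < C ∧ ∀ f : ℝ → ℝ, Measurable f →
      eLpNorm f (ENNReal.ofReal p0) (volume.restrict (Set.Ioi (0 : ℝ))) < ⊤ →
      eLpNorm f p1 (volume.restrict (Set.Ioi (0 : ℝ))) < ⊤ →
      E.ρ (rearr f) ≤ ENNReal.ofReal C *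
        max (eLpNorm f (ENNReal.ofReal p0) (volume.restrict (Set.Ioi (0 : ℝ))))
          (eLpNorm f p1 (volume.restrict (Set.Ioi (0 : ℝ)))) := by
  obtain ⟨p, c, hpp0, hc, hdilL⟩ := lowerBoyd_extract E hp0 hp0E
  have hppos : 0 < p := hp0.trans hpp0
  have hε1 : 0 < 1/p0 - 1/p := sub_pos.2 (one_div_lt_one_div_of_lt hp0 hpp0)
  rcases hp1 with ⟨hub, hp1top⟩ | hp1top
  · obtain ⟨q, c', hq, hqlt, hc', hdilU⟩ := upperBoyd_extract E hub
    set r1 := p1.toReal with hr1def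
    have hp1pos : 0 < p1 := lt_of_le_of_lt (zero_le') hqlt
    have hr1 : 0 < r1 := ENNReal.toReal_pos hp1pos.ne' hp1top
    have hofr1 : ENNReal.ofReal r1 = p1 := ENNReal.ofReal_toReal hp1top
    have hqr1 : q < r1 := by
      rw [← hofr1] at hqlt
      exact (ENNReal.ofReal_lt_ofReal_iff hr1).1 hqlt
    have hε2 : 0 < 1/q - 1/r1 := sub_pos.2 (one_div_lt_one_div_of_lt hq hqr1)
    set B := max 2 (max ((2*E.C)^(1/(1/p0 - 1/p))) ((2*E.C)^(1/(1/q - 1/r1)))) with hBdef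
    have hB2 : 2 ≤ B := le_max_left _ _
    have hB1 : (1:ℝ) < B := by linarith
    have hgeom1 := geom_cond E.one_le_C hε1 hB1 ((le_max_left _ _).trans (le_max_right _ _))
    have hgeom2 := geom_cond E.one_le_C hε2 hB1 ((le_max_right _ _).trans (le_max_right _ _))
    set A1 := (max c 1 + c') * B ^ (1/r1 + 1/p + 1/q) with hA1def
    set A2 := max c 1 * B ^ (1/p) with hA2def
    set K := ENNReal.ofReal E.C * (ENNReal.ofReal E.C * (ENNReal.ofReal A1 * Phi E 1) * 2 +
      ENNReal.ofReal E.C * (ENNReal.ofReal A2 * Phi E 1) * 2) with hKdef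
    have hK : K ≠ ⊤ := K_ne_top_aux E A1 A2
    refine ⟨K.toReal + 1, by positivity, ?_⟩
    intro f hf hNp0 hNp1
    set M := max (eLpNorm f (ENNReal.ofReal p0) (volume.restrict (Set.Ioi (0:ℝ))))
      (eLpNorm f p1 (volume.restrict (Set.Ioi (0:ℝ)))) with hMdef
    rcases eq_or_ne M 0 with hM0 | hMne
    · have hzero : eLpNorm f (ENNReal.ofReal p0) (volume.restrict (Set.Ioi (0:ℝ))) = 0 :=
        le_antisymm (hM0 ▸ le_max_left _ _) (zero_le')
      have hae := (eLpNorm_eq_zero_iff hf.aestronglyMeasurable (by simp [hp0])).1 hzero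
      rw [rearr_zero_of_ae_zero hf hae, rho_zero]
      exact zero_le'
    · have hMtop : M ≠ ⊤ := (max_lt hNp0 hNp1).ne
      set m := M.toReal with hmdef
      have hmpos : 0 < m := ENNReal.toReal_pos hMne hMtop
      have hMm : ENNReal.ofReal m = M := ENNReal.ofReal_toReal hMtop
      have hle0 : eLpNorm f (ENNReal.ofReal p0) (volume.restrict (Set.Ioi (0:ℝ))) ≤
          ENNReal.ofReal m := (le_max_left _ _).trans hMm.ge
      have hle1 : eLpNorm f (ENNReal.ofReal r1) (volume.restrict (Set.Ioi (0:ℝ))) ≤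
          ENNReal.ofReal m := by
        rw [hofr1]
        exact (le_max_right _ _).trans hMm.ge
      have hcheb0 : ∀ u : ℝ, 0 < u → rearr f u ≤ ENNReal.ofReal (m * u ^ (-(1/p0))) :=
        fun u hu => chebyshev_rearr hf hp0 hmpos hu hle0
      have hcheb1 : ∀ u : ℝ, 0 < u → rearr f u ≤ ENNReal.ofReal (m * u ^ (-(1/r1))) :=
        fun u hu => chebyshev_rearr hf hr1 hmpos hu hle1
      set S1 : ℝ → ℝ≥0∞ := fun u => ∑' k : ℕ, ENNReal.ofReal (m * B ^ (((k:ℝ)+1)/r1)) *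
          Set.indicator (Set.Ioo 0 (B ^ (1-(k:ℝ)))) (fun _ => (1:ℝ≥0∞)) u with hS1def
      set S2 : ℝ → ℝ≥0∞ := fun u => ∑' k : ℕ, ENNReal.ofReal (m * B ^ (-(k:ℝ)/p0)) *
          Set.indicator (Set.Ioo 0 (B ^ ((k:ℝ)+1))) (fun _ => (1:ℝ≥0∞)) u with hS2def
      have hcov : ∀ᵐ u ∂(volume.restrict (Set.Ioi (0:ℝ))),
          rearr f u ≤ (fun u => S1 u + S2 u) u := by
        refine ae_Ioi fun u hu => ?_
        rcases le_or_gt u 1 with hu1 | hu1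
        · exact le_trans (cov_small hB2 hr1 hmpos.le hcheb1 hu hu1) le_self_add
        · exact le_trans (cov_large hB2 hp0 hmpos.le hcheb0 hu1) le_add_self
      calc E.ρ (rearr f) ≤ E.ρ (fun u => S1 u + S2 u) := E.mono _ _ hcov
        _ ≤ ENNReal.ofReal E.C * (E.ρ S1 + E.ρ S2) := E.quasi_triangle _ _
        _ ≤ ENNReal.ofReal E.C *
            ((ENNReal.ofReal E.C * (ENNReal.ofReal (m * A1) * Phi E 1) * 2) +
             (ENNReal.ofReal E.C * (ENNReal.ofReal (m * A2) * Phi E 1) * 2)) := by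
            refine mul_le_mul_right (add_le_add ?_ ?_) _
            · exact S_small_bound E hc hc' hq hr1 hppos hmpos.le hB2 hdilL hdilU hgeom2
            · exact S_large_bound E hp0 hpp0 hc hmpos.le hB2 hdilL hgeom1
        _ = ENNReal.ofReal m * K := by
            rw [hKdef, ENNReal.ofReal_mul hmpos.le, ENNReal.ofReal_mul hmpos.le]
            ring
        _ = K * M := by rw [mul_comm, hMm]
        _ ≤ ENNReal.ofReal (K.toReal + 1) * M := final_const_step hK rfl
  · subst hp1top
    set B := max 2 ((2*E.C)^(1/(1/p0 - 1/p))) with hBdef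
    have hB2 : 2 ≤ B := le_max_left _ _
    have hB1 : (1:ℝ) < B := by linarith
    have hgeom1 := geom_cond E.one_le_C hε1 hB1 (le_max_right _ _)
    set A2 := max c 1 * B ^ (1/p) with hA2def
    set K := ENNReal.ofReal E.C * (ENNReal.ofReal E.C * (ENNReal.ofReal A2 * Phi E 1) * 2 +
      ENNReal.ofReal E.C * (ENNReal.ofReal A2 * Phi E 1) * 2) with hKdef
    have hK : K ≠ ⊤ := K_ne_top_aux E A2 A2
    refine ⟨K.toReal + 1, by positivity, ?_⟩
    intro f hf hNp0 hNp1
    set M := max (eLpNorm f (ENNReal.ofReal p0) (volume.restrict (Set.Ioi (0:ℝ))))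
      (eLpNorm f ⊤ (volume.restrict (Set.Ioi (0:ℝ)))) with hMdef
    rcases eq_or_ne M 0 with hM0 | hMne
    · have hzero : eLpNorm f (ENNReal.ofReal p0) (volume.restrict (Set.Ioi (0:ℝ))) = 0 :=
        le_antisymm (hM0 ▸ le_max_left _ _) (zero_le')
      have hae := (eLpNorm_eq_zero_iff hf.aestronglyMeasurable (by simp [hp0])).1 hzero
      rw [rearr_zero_of_ae_zero hf hae, rho_zero]
      exact zero_le'
    · have hMtop : M ≠ ⊤ := (max_lt hNp0 hNp1).ne
      set m := M.toReal with hmdef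
      have hmpos : 0 < m := ENNReal.toReal_pos hMne hMtop
      have hMm : ENNReal.ofReal m = M := ENNReal.ofReal_toReal hMtop
      have hle0 : eLpNorm f (ENNReal.ofReal p0) (volume.restrict (Set.Ioi (0:ℝ))) ≤
          ENNReal.ofReal m := (le_max_left _ _).trans hMm.ge
      have hle1 : eLpNorm f ⊤ (volume.restrict (Set.Ioi (0:ℝ))) ≤ ENNReal.ofReal m :=
        (le_max_right _ _).trans hMm.ge
      have hcheb0 : ∀ u : ℝ, 0 < u → rearr f u ≤ ENNReal.ofReal (m * u ^ (-(1/p0))) :=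
        fun u hu => chebyshev_rearr hf hp0 hmpos hu hle0
      set S1 : ℝ → ℝ≥0∞ := fun u => ∑' k : ℕ, (fun k => if k = 0 then
          (fun u => ENNReal.ofReal m * Set.indicator (Set.Ioo 0 B) (fun _ => (1:ℝ≥0∞)) u)
          else (fun _ => 0)) k u with hS1def
      set S2 : ℝ → ℝ≥0∞ := fun u => ∑' k : ℕ, ENNReal.ofReal (m * B ^ (-(k:ℝ)/p0)) *
          Set.indicator (Set.Ioo 0 (B ^ ((k:ℝ)+1))) (fun _ => (1:ℝ≥0∞)) u with hS2def
      have hcov : ∀ᵐ u ∂(volume.restrict (Set.Ioi (0:ℝ))),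
          rearr f u ≤ (fun u => S1 u + S2 u) u := by
        refine ae_Ioi fun u hu => ?_
        rcases le_or_gt u 1 with hu1 | hu1
        · refine le_trans (le_trans ?_ (ENNReal.le_tsum 0)) le_self_add
          have hind : Set.indicator (Set.Ioo 0 B) (fun _ => (1:ℝ≥0∞)) u = 1 :=
            Set.indicator_of_mem (Set.mem_Ioo.2 ⟨hu, by linarith⟩) _
          have heval : ((fun k : ℕ => if k = 0 then
              (fun u => ENNReal.ofReal m * Set.indicator (Set.Ioo 0 B) (fun _ => (1:ℝ≥0∞)) u)
              else (fun _ => 0)) 0) u =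
              ENNReal.ofReal m * Set.indicator (Set.Ioo 0 B) (fun _ => (1:ℝ≥0∞)) u := by simp
          rw [heval, hind, mul_one]
          exact (rearr_le_top_norm hf u).trans hle1
        · exact le_trans (cov_large hB2 hp0 hmpos.le hcheb0 hu1) le_add_self
      calc E.ρ (rearr f) ≤ E.ρ (fun u => S1 u + S2 u) := E.mono _ _ hcov
        _ ≤ ENNReal.ofReal E.C * (E.ρ S1 + E.ρ S2) := E.quasi_triangle _ _
        _ ≤ ENNReal.ofReal E.C *
            ((ENNReal.ofReal E.C * (ENNReal.ofReal (m * A2) * Phi E 1) * 2) +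
             (ENNReal.ofReal E.C * (ENNReal.ofReal (m * A2) * Phi E 1) * 2)) := by
            refine mul_le_mul_right (add_le_add ?_ ?_) _
            · exact S_top_bound E hp0 hpp0 hc hmpos.le hB2 hdilL hgeom1
            · exact S_large_bound E hp0 hpp0 hc hmpos.le hB2 hdilL hgeom1
        _ = ENNReal.ofReal m * K := by
            rw [hKdef, ENNReal.ofReal_mul hmpos.le]
            ring
        _ = K * M := by rw [mul_comm, hMm]
        _ ≤ ENNReal.ofReal (K.toReal + 1) * M := final_const_step hK rfl


lemma lintegral_rpow_Ioc {a r : ℝ} (ha : 0 < a) (hr : -1 < r) :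
    ∫⁻ t in Set.Ioc 0 a, ENNReal.ofReal (t ^ r) = ENNReal.ofReal (a^(r+1)/(r+1)) := by
  have hint : IntegrableOn (fun t : ℝ => t ^ r) (Set.Ioc 0 a) volume := by
    have h := intervalIntegral.intervalIntegrable_rpow' (a := 0) (b := a) hr
    rw [intervalIntegrable_iff_integrableOn_Ioc_of_le ha.le] at h
    exact h
  have hnn : 0 ≤ᵐ[volume.restrict (Set.Ioc 0 a)] fun t : ℝ => t ^ r := by
    filter_upwards [self_mem_ae_restrict measurableSet_Ioc] with t ht
    exact Real.rpow_nonneg ht.1.le r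
  rw [← ofReal_integral_eq_lintegral_ofReal hint hnn]
  congr 1
  have h1 : ∫ t in Set.Ioc 0 a, t ^ r = ∫ t in (0:ℝ)..a, t ^ r :=
    (intervalIntegral.integral_of_le ha.le).symm
  rw [h1, integral_rpow (Or.inl hr), Real.zero_rpow (by linarith : r+1 ≠ 0)]
  ring

lemma lintegral_rpow_Ioi {a r : ℝ} (ha : 0 < a) (hr : r < -1) :
    ∫⁻ t in Set.Ioi a, ENNReal.ofReal (t ^ r) = ENNReal.ofReal (-a^(r+1)/(r+1)) := by
  have hnn : 0 ≤ᵐ[volume.restrict (Set.Ioi a)] fun t : ℝ => t ^ r := by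
    filter_upwards [self_mem_ae_restrict measurableSet_Ioi] with t ht
    exact Real.rpow_nonneg (ha.trans ht).le r
  rw [← ofReal_integral_eq_lintegral_ofReal (integrableOn_Ioi_rpow_of_lt hr ha) hnn]
  congr 1
  rw [integral_Ioi_rpow_of_lt hr ha]

lemma clamp_abs_bound {x L t : ℝ} (hL : 0 < L) (ht : 0 < t)
    (hlt : t < |x - max (min x L) (-L)|) : L + t < |x| := by
  rcases le_or_gt x L with h1 | h1
  · rcases le_or_gt (-L) x with h2 | h2
    · rw [min_eq_left h1, max_eq_left h2, sub_self, abs_zero] at hlt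
      linarith
    · rw [min_eq_left (by linarith), max_eq_right h2.le, sub_neg_eq_add,
        abs_of_neg (by linarith)] at hlt
      rw [abs_of_neg (by linarith)]
      linarith
  · rw [min_eq_right h1.le, max_eq_left (by linarith), abs_of_pos (by linarith)] at hlt
    rw [abs_of_pos (by linarith)]
    linarith

lemma clamp_abs_le {x L : ℝ} (hL : 0 ≤ L) : |max (min x L) (-L)| ≤ L := by
  rw [abs_le]
  exact ⟨le_max_right _ _, max_le (min_le_right _ _) (by linarith)⟩

lemma layercake_enorm {g : ℝ → ℝ} (hg : Measurable g) {r : ℝ} (hr : 0 < r) :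
    ∫⁻ s, ((‖g s‖₊ : ℝ≥0∞)) ^ r ∂(volume.restrict (Set.Ioi (0:ℝ))) =
      ENNReal.ofReal r * ∫⁻ t in Set.Ioi 0,
        (volume.restrict (Set.Ioi (0:ℝ))) {s | t < |g s|} * ENNReal.ofReal (t ^ (r-1)) := by
  have h := lintegral_rpow_eq_lintegral_meas_lt_mul (volume.restrict (Set.Ioi (0:ℝ)))
    (Filter.Eventually.of_forall fun s => abs_nonneg (g s)) hg.abs.aemeasurable hr
  rw [← h]
  refine lintegral_congr fun s => ?_
  rw [← enorm_eq_nnnorm, Real.enorm_eq_ofReal_abs, ← ENNReal.ofReal_rpow_of_nonneg (abs_nonneg _) hr.le]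


lemma meas_lt_abs_le_dfn {f g : ℝ → ℝ} (hg : Measurable g) {t lam : ℝ}
    (hlam : 0 ≤ lam)
    (himp : ∀ s, t < |g s| → lam < |f s|) :
    (volume.restrict (Set.Ioi (0:ℝ))) {s | t < |g s|} ≤ dfn f (ENNReal.ofReal lam) := by
  have hms : MeasurableSet {s : ℝ | t < |g s|} :=
    measurableSet_lt measurable_const hg.abs
  rw [Measure.restrict_apply hms]
  unfold dfn
  refine measure_mono fun s hs => ?_
  obtain ⟨hs1, hs2⟩ := hs
  rw [Set.mem_setOf_eq] at hs1
  refine ⟨hs2, ?_⟩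
  have := himp s hs1
  exact (ENNReal.ofReal_lt_ofReal_iff (lt_of_le_of_lt hlam this)).2 this

lemma eLpNorm_g1_bound {f : ℝ → ℝ} (hf : Measurable f) {p0 p aa L : ℝ}
    (hp0 : 0 < p0) (hpp0 : p0 < p) (haa : 0 < aa) (hL0 : 0 < L)
    (hd1 : dfn f (ENNReal.ofReal L) ≤ 1)
    (hdp : ∀ lam : ℝ, aa ≤ lam → dfn f (ENNReal.ofReal lam) ≤ ENNReal.ofReal ((aa/lam)^p)) :
    eLpNorm (fun s => f s - max (min (f s) L) (-L)) (ENNReal.ofReal p0)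
      (volume.restrict (Set.Ioi (0:ℝ))) ≤
      ENNReal.ofReal (aa * (1 + p0/(p-p0)) ^ (1/p0)) := by
  set g1 : ℝ → ℝ := fun s => f s - max (min (f s) L) (-L) with hg1def
  have hg1 : Measurable g1 := hf.sub ((hf.min measurable_const).max measurable_const)
  set μ0 := volume.restrict (Set.Ioi (0:ℝ)) with hμ0
  -- pointwise distribution bounds
  have hbd1 : ∀ t : ℝ, 0 < t → μ0 {s | t < |g1 s|} ≤ 1 := by
    intro t ht
    refine le_trans (meas_lt_abs_le_dfn hg1 hL0.le fun s hs => ?_) hd1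
    have := clamp_abs_bound hL0 ht hs
    linarith
  have hbd2 : ∀ t : ℝ, aa ≤ t → μ0 {s | t < |g1 s|} ≤ ENNReal.ofReal ((aa/t)^p) := by
    intro t ht
    have ht0 : 0 < t := lt_of_lt_of_le haa ht
    refine le_trans (meas_lt_abs_le_dfn hg1 ht0.le fun s hs => ?_) (hdp t ht)
    have := clamp_abs_bound hL0 ht0 hs
    linarith
  -- layer cake
  have hlc := layercake_enorm hg1 hp0
  have hsplit : ∫⁻ t in Set.Ioi 0, μ0 {s | t < |g1 s|} * ENNReal.ofReal (t ^ (p0-1)) ≤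
      ENNReal.ofReal (aa^p0/p0) + ENNReal.ofReal (aa^p) * ENNReal.ofReal (aa^(p0-p)/(p-p0)) := by
    have hIoi : Set.Ioi (0:ℝ) = Set.Ioc 0 aa ∪ Set.Ioi aa :=
      (Set.Ioc_union_Ioi_eq_Ioi haa.le).symm
    calc ∫⁻ t in Set.Ioi 0, μ0 {s | t < |g1 s|} * ENNReal.ofReal (t ^ (p0-1))
        ≤ (∫⁻ t in Set.Ioc 0 aa, μ0 {s | t < |g1 s|} * ENNReal.ofReal (t ^ (p0-1))) +
          ∫⁻ t in Set.Ioi aa, μ0 {s | t < |g1 s|} * ENNReal.ofReal (t ^ (p0-1)) := by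
          rw [hIoi]
          exact lintegral_union_le _ _ _
      _ ≤ (∫⁻ t in Set.Ioc 0 aa, ENNReal.ofReal (t ^ (p0-1))) +
          ∫⁻ t in Set.Ioi aa, ENNReal.ofReal (aa^p * t ^ (p0-1-p)) := by
          refine add_le_add ?_ ?_
          · refine setLIntegral_mono' measurableSet_Ioc fun t ht => ?_
            calc μ0 {s | t < |g1 s|} * ENNReal.ofReal (t ^ (p0-1))
                ≤ 1 * ENNReal.ofReal (t ^ (p0-1)) := mul_le_mul_left (hbd1 t ht.1) _
              _ = ENNReal.ofReal (t ^ (p0-1)) := one_mul _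
          · refine setLIntegral_mono' measurableSet_Ioi fun t ht => ?_
            have ht0 : (0:ℝ) < t := haa.trans ht
            calc μ0 {s | t < |g1 s|} * ENNReal.ofReal (t ^ (p0-1))
                ≤ ENNReal.ofReal ((aa/t)^p) * ENNReal.ofReal (t ^ (p0-1)) :=
                  mul_le_mul_left (hbd2 t (le_of_lt ht)) _
              _ = ENNReal.ofReal ((aa/t)^p * t ^ (p0-1)) :=
                  (ENNReal.ofReal_mul (Real.rpow_nonneg (by positivity) _)).symm
              _ = ENNReal.ofReal (aa^p * t ^ (p0-1-p)) := by
                  congr 1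
                  rw [Real.div_rpow haa.le ht0.le, Real.rpow_sub ht0 (p0-1) p]
                  ring
      _ = ENNReal.ofReal (aa^p0/p0) + ENNReal.ofReal (aa^p) * ENNReal.ofReal (aa^(p0-p)/(p-p0)) := by
          congr 1
          · rw [lintegral_rpow_Ioc haa (by linarith), show p0-1+1 = p0 by ring]
          · have hsc : ∀ t : ℝ, ENNReal.ofReal (aa^p * t ^ (p0-1-p)) =
                ENNReal.ofReal (aa^p) * ENNReal.ofReal (t ^ (p0-1-p)) := fun t =>
              ENNReal.ofReal_mul (Real.rpow_nonneg haa.le _)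
            rw [lintegral_congr hsc, lintegral_const_mul' _ _ ENNReal.ofReal_ne_top,
              lintegral_rpow_Ioi haa (by linarith)]
            congr 2
            rw [show p0-1-p+1 = p0-p by ring, show p - p0 = -(p0-p) by ring, div_neg, neg_div]
  have hppos' : (0:ℝ) < p - p0 := by linarith
  have hfin : ∫⁻ s, ((‖g1 s‖₊ : ℝ≥0∞)) ^ p0 ∂μ0 ≤
      ENNReal.ofReal (aa^p0 * (1 + p0/(p-p0))) := by
    calc ∫⁻ s, ((‖g1 s‖₊ : ℝ≥0∞)) ^ p0 ∂μ0
        = ENNReal.ofReal p0 * ∫⁻ t in Set.Ioi 0,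
            μ0 {s | t < |g1 s|} * ENNReal.ofReal (t ^ (p0-1)) := hlc
      _ ≤ ENNReal.ofReal p0 * (ENNReal.ofReal (aa^p0/p0) +
            ENNReal.ofReal (aa^p) * ENNReal.ofReal (aa^(p0-p)/(p-p0))) :=
          mul_le_mul_right hsplit _
      _ = ENNReal.ofReal (aa^p0 * (1 + p0/(p-p0))) := by
          rw [← ENNReal.ofReal_mul (Real.rpow_nonneg haa.le _),
            ← ENNReal.ofReal_add (by positivity) (by positivity),
            ← ENNReal.ofReal_mul hp0.le]
          congr 1
          have hpow : aa^p * aa^(p0-p) = aa^p0 := by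
            rw [← Real.rpow_add haa]
            congr 1
            ring
          have hppos'' : (0:ℝ) < p - p0 := by linarith
          rw [← mul_div_assoc, hpow]
          field_simp
  rw [eLpNorm_eq_lintegral_rpow_enorm_toReal (by simp [hp0] : ENNReal.ofReal p0 ≠ 0)
    ENNReal.ofReal_ne_top, ENNReal.toReal_ofReal hp0.le]
  have hκ : (0:ℝ) < 1 + p0/(p-p0) := by positivity
  calc (∫⁻ s, ((‖g1 s‖₊ : ℝ≥0∞)) ^ p0 ∂μ0) ^ (1/p0)
      ≤ (ENNReal.ofReal (aa^p0 * (1 + p0/(p-p0)))) ^ (1/p0) :=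
        ENNReal.rpow_le_rpow hfin (by positivity)
    _ = ENNReal.ofReal ((aa^p0 * (1 + p0/(p-p0))) ^ (1/p0)) :=
        ENNReal.ofReal_rpow_of_nonneg (by positivity) (by positivity)
    _ = ENNReal.ofReal (aa * (1 + p0/(p-p0)) ^ (1/p0)) := by
        congr 1
        rw [Real.mul_rpow (Real.rpow_nonneg haa.le _) hκ.le, ← Real.rpow_mul haa.le,
          mul_one_div, div_self hp0.ne', Real.rpow_one]


lemma eLpNorm_g2_top (f : ℝ → ℝ) {L : ℝ} (hL : 0 ≤ L) :
    eLpNorm (fun s => max (min (f s) L) (-L)) ⊤ (volume.restrict (Set.Ioi (0:ℝ))) ≤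
      ENNReal.ofReal L := by
  rw [eLpNorm_exponent_top]
  refine eLpNormEssSup_le_of_ae_bound (C := L) (Filter.Eventually.of_forall fun s => ?_)
  rw [Real.norm_eq_abs]
  exact clamp_abs_le hL

lemma eLpNorm_g2_fin {f : ℝ → ℝ} (hf : Measurable f) {r1 q aa' L : ℝ}
    (hq : 0 < q) (hqr1 : q < r1) (haa' : 0 < aa') (hL0 : 0 < L) (hLa : L ≤ aa')
    (hdq : ∀ lam : ℝ, 0 < lam → lam ≤ aa' →
      dfn f (ENNReal.ofReal lam) ≤ ENNReal.ofReal ((aa'/lam)^q)) :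
    eLpNorm (fun s => max (min (f s) L) (-L)) (ENNReal.ofReal r1)
      (volume.restrict (Set.Ioi (0:ℝ))) ≤
      ENNReal.ofReal (aa' * (r1/(r1-q)) ^ (1/r1)) := by
  have hr1 : 0 < r1 := hq.trans hqr1
  set g2 : ℝ → ℝ := fun s => max (min (f s) L) (-L) with hg2def
  have hg2 : Measurable g2 := (hf.min measurable_const).max measurable_const
  set μ0 := volume.restrict (Set.Ioi (0:ℝ)) with hμ0
  have habs : ∀ s, |g2 s| ≤ |f s| := by
    intro s
    show |max (min (f s) L) (-L)| ≤ |f s|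
    rcases le_or_gt (f s) L with h1 | h1
    · rcases le_or_gt (-L) (f s) with h2 | h2
      · rw [min_eq_left h1, max_eq_left h2]
      · rw [min_eq_left (by linarith), max_eq_right h2.le, abs_of_nonpos (by linarith),
          abs_of_neg (by linarith)]
        linarith
    · rw [min_eq_right h1.le, max_eq_left (by linarith), abs_of_nonneg hL0.le,
        abs_of_pos (by linarith)]
      linarith
  have hbd1 : ∀ t : ℝ, 0 < t → t ≤ aa' → μ0 {s | t < |g2 s|} ≤ ENNReal.ofReal ((aa'/t)^q) := by
    intro t ht htaa
    refine le_trans (meas_lt_abs_le_dfn hg2 ht.le fun s hs => lt_of_lt_of_le hs (habs s))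
      (hdq t ht htaa)
  have hbd2 : ∀ t : ℝ, L < t → μ0 {s | t < |g2 s|} = 0 := by
    intro t ht
    have : {s : ℝ | t < |g2 s|} = ∅ := by
      ext s
      simp only [Set.mem_setOf_eq, Set.mem_empty_iff_false, iff_false, not_lt]
      exact le_trans (clamp_abs_le hL0.le) ht.le
    rw [this]
    simp
  have hlc := layercake_enorm hg2 hr1
  have hsplit : ∫⁻ t in Set.Ioi 0, μ0 {s | t < |g2 s|} * ENNReal.ofReal (t ^ (r1-1)) ≤
      ENNReal.ofReal (aa'^q) * ENNReal.ofReal (L^(r1-q)/(r1-q)) := by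
    have hIoi : Set.Ioi (0:ℝ) = Set.Ioc 0 L ∪ Set.Ioi L :=
      (Set.Ioc_union_Ioi_eq_Ioi hL0.le).symm
    calc ∫⁻ t in Set.Ioi 0, μ0 {s | t < |g2 s|} * ENNReal.ofReal (t ^ (r1-1))
        ≤ (∫⁻ t in Set.Ioc 0 L, μ0 {s | t < |g2 s|} * ENNReal.ofReal (t ^ (r1-1))) +
          ∫⁻ t in Set.Ioi L, μ0 {s | t < |g2 s|} * ENNReal.ofReal (t ^ (r1-1)) := by
          rw [hIoi]
          exact lintegral_union_le _ _ _
      _ ≤ (∫⁻ t in Set.Ioc 0 L, ENNReal.ofReal (aa'^q * t ^ (r1-1-q))) + 0 := by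
          refine add_le_add ?_ ?_
          · refine setLIntegral_mono' measurableSet_Ioc fun t ht => ?_
            calc μ0 {s | t < |g2 s|} * ENNReal.ofReal (t ^ (r1-1))
                ≤ ENNReal.ofReal ((aa'/t)^q) * ENNReal.ofReal (t ^ (r1-1)) :=
                  mul_le_mul_left (hbd1 t ht.1 (ht.2.trans hLa)) _
              _ = ENNReal.ofReal ((aa'/t)^q * t ^ (r1-1)) :=
                  (ENNReal.ofReal_mul (Real.rpow_nonneg (div_nonneg haa'.le ht.1.le) _)).symm
              _ = ENNReal.ofReal (aa'^q * t ^ (r1-1-q)) := by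
                  congr 1
                  rw [Real.div_rpow haa'.le ht.1.le, Real.rpow_sub ht.1 (r1-1) q]
                  ring
          · refine le_of_eq ?_
            rw [← lintegral_zero]
            refine setLIntegral_congr_fun measurableSet_Ioi ?_
            exact fun t ht => by rw [hbd2 t ht, zero_mul]
      _ = ENNReal.ofReal (aa'^q) * ENNReal.ofReal (L^(r1-q)/(r1-q)) := by
          rw [add_zero]
          have hsc : ∀ t : ℝ, ENNReal.ofReal (aa'^q * t ^ (r1-1-q)) =
              ENNReal.ofReal (aa'^q) * ENNReal.ofReal (t ^ (r1-1-q)) := fun t =>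
            ENNReal.ofReal_mul (Real.rpow_nonneg haa'.le _)
          rw [lintegral_congr hsc, lintegral_const_mul' _ _ ENNReal.ofReal_ne_top,
            lintegral_rpow_Ioc hL0 (by linarith), show r1-1-q+1 = r1-q by ring]
  have hrq : (0:ℝ) < r1 - q := by linarith
  have hfin : ∫⁻ s, ((‖g2 s‖₊ : ℝ≥0∞)) ^ r1 ∂μ0 ≤
      ENNReal.ofReal (aa'^r1 * (r1/(r1-q))) := by
    calc ∫⁻ s, ((‖g2 s‖₊ : ℝ≥0∞)) ^ r1 ∂μ0
        = ENNReal.ofReal r1 * ∫⁻ t in Set.Ioi 0,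
            μ0 {s | t < |g2 s|} * ENNReal.ofReal (t ^ (r1-1)) := hlc
      _ ≤ ENNReal.ofReal r1 * (ENNReal.ofReal (aa'^q) * ENNReal.ofReal (L^(r1-q)/(r1-q))) :=
          mul_le_mul_right hsplit _
      _ ≤ ENNReal.ofReal r1 * (ENNReal.ofReal (aa'^q) * ENNReal.ofReal (aa'^(r1-q)/(r1-q))) := by
          refine mul_le_mul_right (mul_le_mul_right (ENNReal.ofReal_le_ofReal ?_) _) _
          exact (div_le_div_iff_of_pos_right hrq).2 (Real.rpow_le_rpow hL0.le hLa (by linarith))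
      _ = ENNReal.ofReal (aa'^r1 * (r1/(r1-q))) := by
          rw [← ENNReal.ofReal_mul (Real.rpow_nonneg haa'.le _), ← ENNReal.ofReal_mul hr1.le]
          congr 1
          have hpow : aa'^q * aa'^(r1-q) = aa'^r1 := by
            rw [← Real.rpow_add haa']
            congr 1
            ring
          rw [← mul_div_assoc, hpow]
          field_simp
  rw [eLpNorm_eq_lintegral_rpow_enorm_toReal (by simp [hr1] : ENNReal.ofReal r1 ≠ 0)
    ENNReal.ofReal_ne_top, ENNReal.toReal_ofReal hr1.le]
  have hκ : (0:ℝ) < r1/(r1-q) := by positivity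
  calc (∫⁻ s, ((‖g2 s‖₊ : ℝ≥0∞)) ^ r1 ∂μ0) ^ (1/r1)
      ≤ (ENNReal.ofReal (aa'^r1 * (r1/(r1-q)))) ^ (1/r1) :=
        ENNReal.rpow_le_rpow hfin (by positivity)
    _ = ENNReal.ofReal ((aa'^r1 * (r1/(r1-q))) ^ (1/r1)) :=
        ENNReal.ofReal_rpow_of_nonneg (by positivity) (by positivity)
    _ = ENNReal.ofReal (aa' * (r1/(r1-q)) ^ (1/r1)) := by
        congr 1
        rw [Real.mul_rpow (Real.rpow_nonneg haa'.le _) hκ.le, ← Real.rpow_mul haa'.le,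
          mul_one_div, div_self hr1.ne', Real.rpow_one]


lemma dfn_from_lower (E : RIQBFS) {f : ℝ → ℝ} {p c : ℝ} (hc : 0 < c) (hp : 0 < p)
    (hdil : ∀ a : ℝ, 0 < a → a < 1 → dilNorm E a ≤ ENNReal.ofReal (c * a ^ (-(1 / p))))
    (hN : E.ρ (rearr f) ≠ ⊤)
    (haa : 0 < max c 1 * (E.ρ (rearr f)).toReal / (Phi E 1).toReal) {lam : ℝ}
    (hlam : max c 1 * (E.ρ (rearr f)).toReal / (Phi E 1).toReal ≤ lam) :
    dfn f (ENNReal.ofReal lam) ≤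
      ENNReal.ofReal (((max c 1 * (E.ρ (rearr f)).toReal / (Phi E 1).toReal)/lam)^p) := by
  set aa := max c 1 * (E.ρ (rearr f)).toReal / (Phi E 1).toReal with haadef
  have hlam0 : 0 < lam := lt_of_lt_of_le haa hlam
  set u := (aa/lam)^p with hudef
  have hu0 : 0 < u := Real.rpow_pos_of_pos (div_pos haa hlam0) _
  have hu1 : u ≤ 1 := Real.rpow_le_one (div_nonneg haa.le hlam0.le)
    ((div_le_one hlam0).2 hlam) hp.le
  have h := rearr_pointwise_lower E hc hdil hN hu0 hu1
  have hval : aa * u ^ (-(1/p)) = lam := by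
    rw [hudef, ← Real.rpow_mul (div_nonneg haa.le hlam0.le),
      show p * (-(1/p)) = -1 by field_simp, Real.rpow_neg_one, inv_div]
    field_simp
  rw [hval] at h
  exact rearr_le_iff.1 h

lemma dfn_from_upper (E : RIQBFS) {f : ℝ → ℝ} {q c' : ℝ} (hc' : 0 < c') (hq : 0 < q)
    (hdil : ∀ a : ℝ, 1 ≤ a → dilNorm E a ≤ ENNReal.ofReal (c' * a ^ (-(1 / q))))
    (hN : E.ρ (rearr f) ≠ ⊤)
    (haa : 0 < max c' 1 * (E.ρ (rearr f)).toReal / (Phi E 1).toReal) {lam : ℝ}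
    (hlam0 : 0 < lam)
    (hlam : lam ≤ max c' 1 * (E.ρ (rearr f)).toReal / (Phi E 1).toReal) :
    dfn f (ENNReal.ofReal lam) ≤
      ENNReal.ofReal (((max c' 1 * (E.ρ (rearr f)).toReal / (Phi E 1).toReal)/lam)^q) := by
  set aa := max c' 1 * (E.ρ (rearr f)).toReal / (Phi E 1).toReal with haadef
  set u := (aa/lam)^q with hudef
  have hu1 : 1 ≤ u := Real.one_le_rpow ((le_div_iff₀ hlam0).2 (by linarith)) hq.le
  have h := rearr_pointwise_upper E hc' hdil hN hu1
  have hval : aa * u ^ (-(1/q)) = lam := by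
    rw [hudef, ← Real.rpow_mul (div_nonneg haa.le hlam0.le),
      show q * (-(1/q)) = -1 by field_simp, Real.rpow_neg_one, inv_div]
    field_simp
  rw [hval] at h
  exact rearr_le_iff.1 h

lemma rearr_one_le_lower (E : RIQBFS) {f : ℝ → ℝ} {p c : ℝ} (hc : 0 < c)
    (hdil : ∀ a : ℝ, 0 < a → a < 1 → dilNorm E a ≤ ENNReal.ofReal (c * a ^ (-(1 / p))))
    (hN : E.ρ (rearr f) ≠ ⊤) :
    rearr f 1 ≤ ENNReal.ofReal (max c 1 * (E.ρ (rearr f)).toReal / (Phi E 1).toReal) := by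
  have h := rearr_pointwise_lower E hc hdil hN one_pos le_rfl
  rwa [Real.one_rpow, mul_one] at h

lemma rearr_one_le_upper (E : RIQBFS) {f : ℝ → ℝ} {q c' : ℝ} (hc' : 0 < c')
    (hdil : ∀ a : ℝ, 1 ≤ a → dilNorm E a ≤ ENNReal.ofReal (c' * a ^ (-(1 / q))))
    (hN : E.ρ (rearr f) ≠ ⊤) :
    rearr f 1 ≤ ENNReal.ofReal (max c' 1 * (E.ρ (rearr f)).toReal / (Phi E 1).toReal) := by
  have h := rearr_pointwise_upper E hc' hdil hN le_rfl
  rwa [Real.one_rpow, mul_one] at h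


lemma part1_zero_case (p0 : ℝ) (p1 : ℝ≥0∞) {E : RIQBFS} {f : ℝ → ℝ} (hf : Measurable f)
    (h0 : E.ρ (rearr f) = 0) :
    (⨅ (g : (ℝ → ℝ) × (ℝ → ℝ)) (_ : g.1 + g.2 = f ∧ Measurable g.1 ∧ Measurable g.2),
        eLpNorm g.1 (ENNReal.ofReal p0) (volume.restrict (Set.Ioi (0 : ℝ))) +
          eLpNorm g.2 p1 (volume.restrict (Set.Ioi (0 : ℝ)))) = 0 := by
  have hae := ae_zero_of_rho_zero E hf h0
  refine le_antisymm ?_ (zero_le')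
  refine le_trans (iInf_le_of_le ⟨f, fun _ => 0⟩ (iInf_le_of_le ?_ le_rfl)) ?_
  · exact ⟨by funext s; simp, hf, measurable_const⟩
  · rw [eLpNorm_congr_ae hae, eLpNorm_zero, eLpNorm_zero']
    simp

lemma part1_bound (E : RIQBFS) (p0 : ℝ) (p1 : ℝ≥0∞) (hp0 : 0 < p0)
    (hp0E : ENNReal.ofReal p0 < lowerBoyd E)
    (hp1 : (upperBoyd E < p1 ∧ p1 ≠ ⊤) ∨ p1 = ⊤) :
    ∃ c : ℝ, 0 < c ∧ ∀ f : ℝ → ℝ, Measurable f → E.ρ (rearr f) < ⊤ →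
      (⨅ (g : (ℝ → ℝ) × (ℝ → ℝ)) (_ : g.1 + g.2 = f ∧ Measurable g.1 ∧ Measurable g.2),
          eLpNorm g.1 (ENNReal.ofReal p0) (volume.restrict (Set.Ioi (0 : ℝ))) +
            eLpNorm g.2 p1 (volume.restrict (Set.Ioi (0 : ℝ)))) ≤
        ENNReal.ofReal c * E.ρ (rearr f) := by
  obtain ⟨p, c, hpp0, hc, hdilL⟩ := lowerBoyd_extract E hp0 hp0E
  have hppos : 0 < p := hp0.trans hpp0
  have hpsub : (0:ℝ) < p - p0 := by linarith
  have φpos := Phi_pos E one_pos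
  have φfin := Phi_lt_top E (1:ℝ)
  set φ1 := (Phi E 1).toReal with hφ1def
  have hφ1 : 0 < φ1 := ENNReal.toReal_pos φpos.ne' φfin.ne
  set κ1 := (1 + p0/(p-p0)) ^ (1/p0) with hκ1def
  have hκ1 : 0 < κ1 := Real.rpow_pos_of_pos (by positivity) _
  rcases hp1 with ⟨hub, hp1top⟩ | hp1top
  · obtain ⟨q, c', hq, hqlt, hc', hdilU⟩ := upperBoyd_extract E hub
    set r1 := p1.toReal with hr1def
    have hp1pos : 0 < p1 := lt_of_le_of_lt (zero_le') hqlt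
    have hr1 : 0 < r1 := ENNReal.toReal_pos hp1pos.ne' hp1top
    have hofr1 : ENNReal.ofReal r1 = p1 := ENNReal.ofReal_toReal hp1top
    have hqr1 : q < r1 := by
      rw [← hofr1] at hqlt
      exact (ENNReal.ofReal_lt_ofReal_iff hr1).1 hqlt
    set κ2 := (r1/(r1-q)) ^ (1/r1) with hκ2def
    have hrq : (0:ℝ) < r1 - q := by linarith
    have hκ2 : 0 < κ2 := Real.rpow_pos_of_pos (by positivity) _
    refine ⟨max c 1 / φ1 * κ1 + max c' 1 / φ1 * κ2, by positivity, ?_⟩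
    intro f hf hN
    rcases eq_or_ne (E.ρ (rearr f)) 0 with h0 | hne0
    · rw [part1_zero_case p0 p1 hf h0]
      exact zero_le'
    · set n := (E.ρ (rearr f)).toReal with hndef
      have hn : 0 < n := ENNReal.toReal_pos hne0 hN.ne
      set aa := max c 1 * n / φ1 with haadef
      have haa : 0 < aa := by positivity
      set aa' := max c' 1 * n / φ1 with haadef'
      have haa' : 0 < aa' := by positivity
      set L := min aa aa' with hLdef
      have hL0 : 0 < L := lt_min haa haa'
      have hd1 : dfn f (ENNReal.ofReal L) ≤ 1 := by
        have h1 : rearr f 1 ≤ ENNReal.ofReal L := by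
          rcases le_total aa aa' with hmin | hmin
          · rw [hLdef, min_eq_left hmin]
            exact rearr_one_le_lower E hc hdilL hN.ne
          · rw [hLdef, min_eq_right hmin]
            exact rearr_one_le_upper E hc' hdilU hN.ne
        have := rearr_le_iff.1 h1
        rwa [ENNReal.ofReal_one] at this
      have hdp : ∀ lam : ℝ, aa ≤ lam →
          dfn f (ENNReal.ofReal lam) ≤ ENNReal.ofReal ((aa/lam)^p) :=
        fun lam hlam => dfn_from_lower E hc hppos hdilL hN.ne haa hlam
      have hdq : ∀ lam : ℝ, 0 < lam → lam ≤ aa' →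
          dfn f (ENNReal.ofReal lam) ≤ ENNReal.ofReal ((aa'/lam)^q) :=
        fun lam hlam0 hlam => dfn_from_upper E hc' hq hdilU hN.ne haa' hlam0 hlam
      have hb1 := eLpNorm_g1_bound hf hp0 hpp0 haa hL0 hd1 hdp
      have hb2 := eLpNorm_g2_fin hf hq hqr1 haa' hL0 (min_le_right _ _) hdq
      refine le_trans (iInf_le_of_le
        ⟨fun s => f s - max (min (f s) L) (-L), fun s => max (min (f s) L) (-L)⟩
        (iInf_le_of_le ⟨by funext s; simp, hf.sub ((hf.min measurable_const).max
          measurable_const), (hf.min measurable_const).max measurable_const⟩ le_rfl)) ?_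
      calc eLpNorm (fun s => f s - max (min (f s) L) (-L)) (ENNReal.ofReal p0)
            (volume.restrict (Set.Ioi (0:ℝ))) +
          eLpNorm (fun s => max (min (f s) L) (-L)) p1 (volume.restrict (Set.Ioi (0:ℝ)))
          ≤ ENNReal.ofReal (aa * κ1) + ENNReal.ofReal (aa' * κ2) := by
            refine add_le_add hb1 ?_
            rw [← hofr1]
            exact hb2
        _ = ENNReal.ofReal ((max c 1 / φ1 * κ1 + max c' 1 / φ1 * κ2) * n) := by
            rw [← ENNReal.ofReal_add (by positivity) (by positivity)]
            congr 1
            rw [haadef, haadef']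
            field_simp
        _ = ENNReal.ofReal (max c 1 / φ1 * κ1 + max c' 1 / φ1 * κ2) * E.ρ (rearr f) := by
            rw [ENNReal.ofReal_mul (by positivity), hndef, ENNReal.ofReal_toReal hN.ne]
  · subst hp1top
    refine ⟨max c 1 / φ1 * κ1 + max c 1 / φ1, by positivity, ?_⟩
    intro f hf hN
    rcases eq_or_ne (E.ρ (rearr f)) 0 with h0 | hne0
    · rw [part1_zero_case p0 ⊤ hf h0]
      exact zero_le'
    · set n := (E.ρ (rearr f)).toReal with hndef
      have hn : 0 < n := ENNReal.toReal_pos hne0 hN.ne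
      set aa := max c 1 * n / φ1 with haadef
      have haa : 0 < aa := by positivity
      have hd1 : dfn f (ENNReal.ofReal aa) ≤ 1 := by
        have h1 := rearr_one_le_lower E hc hdilL hN.ne
        have := rearr_le_iff.1 h1
        rwa [ENNReal.ofReal_one] at this
      have hdp : ∀ lam : ℝ, aa ≤ lam →
          dfn f (ENNReal.ofReal lam) ≤ ENNReal.ofReal ((aa/lam)^p) :=
        fun lam hlam => dfn_from_lower E hc hppos hdilL hN.ne haa hlam
      have hb1 := eLpNorm_g1_bound hf hp0 hpp0 haa haa hd1 hdp
      have hb2 := eLpNorm_g2_top f (L := aa) haa.le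
      refine le_trans (iInf_le_of_le
        ⟨fun s => f s - max (min (f s) aa) (-aa), fun s => max (min (f s) aa) (-aa)⟩
        (iInf_le_of_le ⟨by funext s; simp, hf.sub ((hf.min measurable_const).max
          measurable_const), (hf.min measurable_const).max measurable_const⟩ le_rfl)) ?_
      calc eLpNorm (fun s => f s - max (min (f s) aa) (-aa)) (ENNReal.ofReal p0)
            (volume.restrict (Set.Ioi (0:ℝ))) +
          eLpNorm (fun s => max (min (f s) aa) (-aa)) ⊤ (volume.restrict (Set.Ioi (0:ℝ)))
          ≤ ENNReal.ofReal (aa * κ1) + ENNReal.ofReal aa := add_le_add hb1 hb2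
        _ = ENNReal.ofReal ((max c 1 / φ1 * κ1 + max c 1 / φ1) * n) := by
            rw [← ENNReal.ofReal_add (by positivity) haa.le]
            congr 1
            rw [haadef]
            field_simp
        _ = ENNReal.ofReal (max c 1 / φ1 * κ1 + max c 1 / φ1) * E.ρ (rearr f) := by
            rw [ENNReal.ofReal_mul (by positivity), hndef, ENNReal.ofReal_toReal hN.ne]

/-- Let `E` be a r.i. quasi-Banach function space with Boyd indices `p_E, q_E`, let
`0 < p₀ < p_E`, and assume either `q_E < p₁ < ∞` or `p₁ = ∞`. Then the continuous
embeddings `L_{p₀} ∩ L_{p₁} ⊂ E ⊂ L_{p₀} + L_{p₁}` hold. -/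
theorem stmt12 (E : RIQBFS) (p0 : ℝ) (p1 : ℝ≥0∞)
    (hp0 : 0 < p0) (hp0E : ENNReal.ofReal p0 < lowerBoyd E)
    (hp1 : (upperBoyd E < p1 ∧ p1 ≠ ⊤) ∨ p1 = ⊤) :
    (∃ c : ℝ, 0 < c ∧ ∀ f : ℝ → ℝ, Measurable f → E.ρ (rearr f) < ⊤ →
      (⨅ (g : (ℝ → ℝ) × (ℝ → ℝ)) (_ : g.1 + g.2 = f ∧ Measurable g.1 ∧ Measurable g.2),
          eLpNorm g.1 (ENNReal.ofReal p0) (volume.restrict (Set.Ioi (0 : ℝ))) +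
            eLpNorm g.2 p1 (volume.restrict (Set.Ioi (0 : ℝ)))) ≤
        ENNReal.ofReal c * E.ρ (rearr f)) ∧
    (∃ C : ℝ, 0 < C ∧ ∀ f : ℝ → ℝ, Measurable f →
      eLpNorm f (ENNReal.ofReal p0) (volume.restrict (Set.Ioi (0 : ℝ))) < ⊤ →
      eLpNorm f p1 (volume.restrict (Set.Ioi (0 : ℝ))) < ⊤ →
      E.ρ (rearr f) ≤ ENNReal.ofReal C *
        max (eLpNorm f (ENNReal.ofReal p0) (volume.restrict (Set.Ioi (0 : ℝ))))
          (eLpNorm f p1 (volume.restrict (Set.Ioi (0 : ℝ))))) :=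
  ⟨part1_bound E p0 p1 hp0 hp0E hp1, part2_bound E p0 p1 hp0 hp0E hp1⟩
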